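/- arXiv:1811.02096 — 4 statements merged into one kernel-verified Lean document; each statement's English description precedes it below -/
import Mathlib

section
/- Let Γ = XᵀX/n − Σ_x, where the rows x_iᵀ of X are i.i.d. zero-mean random vectors with covariance Σ_x satisfying assumptions (A1)–(A3). Fix δ > 0 and suppose the sample size satisfies (2k log p)⁷/n ≤ C₂ n^{−c₂}. Then with probability at least 1 − C n^{−c} − exp(−c' log p), |vᵀ Γ v| ≤ δ simultaneously for all v ∈ ℝ^p with at most 2k nonzero coordinates and ‖v‖₂ ≤ 1. -/
open MeasureTheory ProbabilityTheory
open scoped ENNReal BigOperators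

open Real in
lemma aux_exp_le_quad (u : ℝ) : Real.exp u ≤ 1 + u + u^2 * Real.exp |u| := by
  rcases le_or_gt 0 u with hu | hu
  · rw [abs_of_nonneg hu]
    have h1 : (-u) + 1 ≤ Real.exp (-u) := Real.add_one_le_exp _
    rw [Real.exp_neg] at h1
    have hE := Real.exp_pos u
    have h2 : (1 - u) * Real.exp u ≤ 1 := by
      calc (1 - u) * Real.exp u ≤ (Real.exp u)⁻¹ * Real.exp u := by
              apply mul_le_mul_of_nonneg_right _ hE.le
              linarith
        _ = 1 := inv_mul_cancel₀ hE.ne'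
    nlinarith [mul_nonneg hu (sub_nonneg.2 h2)]
  · rw [abs_of_neg hu]
    have hF := Real.exp_pos (-u)
    have hEF : Real.exp u * Real.exp (-u) = 1 := by
      rw [← Real.exp_add]; simp
    have h1 : (-u) + 1 ≤ Real.exp (-u) := Real.add_one_le_exp _
    rw [← mul_le_mul_iff_of_pos_right hF, add_mul, add_mul, hEF]
    set F := Real.exp (-u) with hFdef
    have hF1 : (1:ℝ) ≤ F := by linarith
    rcases le_or_gt 0 (1 + u) with h1u | h1u
    · have ha : (1+u)*((-u)+1) ≤ (1+u)*F := mul_le_mul_of_nonneg_left h1 h1u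
      have hb : ((-u)+1)*((-u)+1) ≤ F*F :=
        mul_le_mul h1 h1 (by linarith) hF.le
      have hb' : u^2*(((-u)+1)*((-u)+1)) ≤ u^2*(F*F) :=
        mul_le_mul_of_nonneg_left hb (sq_nonneg u)
      nlinarith [sq_nonneg u]
    · have h2 : u^2*(1-u) ≤ u^2*F := by nlinarith [sq_nonneg u]
      have hinner : (1:ℝ) ≤ 1 + u + u^2*F := by nlinarith [sq_nonneg u]
      calc (1:ℝ) ≤ F * (1 + u + u^2*F) := by nlinarith [mul_le_mul_of_nonneg_left hinner hF.le]
        _ = 1*F + u*F + u^2 * F * F := by ring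

lemma aux_sq_le_exp {s : ℝ} (hs : 0 ≤ s) : s^2 ≤ 4 * Real.exp s := by
  have h := Real.add_one_le_exp (s/2)
  have h2 : Real.exp s = Real.exp (s/2) * Real.exp (s/2) := by
    rw [← Real.exp_add]; ring_nf
  nlinarith [Real.exp_pos (s/2)]

section BernsteinAux
open Real
variable {Ω : Type*} [MeasurableSpace Ω] {μ : Measure Ω} [IsProbabilityMeasure μ]

lemma aux_orlicz_int {Z : Ω → ℝ} (hZ : Measurable Z) {C₁ : ℝ} (hC₁ : 0 < C₁)
    (horl : ∫⁻ ω, ENNReal.ofReal (Real.exp (|Z ω| / C₁)) ∂μ ≤ 2) :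
    Integrable (fun ω => Real.exp (|Z ω| / C₁)) μ ∧
      (∫ ω, Real.exp (|Z ω| / C₁) ∂μ) ≤ 2 ∧ Integrable Z μ := by
  have hmeas : Measurable (fun ω => Real.exp (|Z ω| / C₁)) := (hZ.abs.div_const C₁).exp
  have hint : Integrable (fun ω => Real.exp (|Z ω| / C₁)) μ := by
    refine ⟨hmeas.aestronglyMeasurable, ?_⟩
    rw [hasFiniteIntegral_iff_norm]
    calc ∫⁻ ω, ENNReal.ofReal ‖Real.exp (|Z ω| / C₁)‖ ∂μ
        = ∫⁻ ω, ENNReal.ofReal (Real.exp (|Z ω| / C₁)) ∂μ := by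
          congr 1; funext ω; rw [Real.norm_eq_abs, abs_of_pos (Real.exp_pos _)]
      _ ≤ 2 := horl
      _ < ⊤ := by norm_num
  refine ⟨hint, ?_, ?_⟩
  · rw [integral_eq_lintegral_of_nonneg_ae (Filter.Eventually.of_forall fun ω => (Real.exp_pos _).le)
      hmeas.aestronglyMeasurable]
    calc (∫⁻ ω, ENNReal.ofReal (Real.exp (|Z ω| / C₁)) ∂μ).toReal
        ≤ (2 : ℝ≥0∞).toReal := ENNReal.toReal_mono (by norm_num) horl
      _ = 2 := by norm_num
  · refine Integrable.mono' (hint.const_mul C₁) hZ.aestronglyMeasurable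
      (Filter.Eventually.of_forall fun ω => ?_)
    rw [Real.norm_eq_abs]
    have h1 : |Z ω| / C₁ ≤ Real.exp (|Z ω| / C₁) := by
      have := Real.add_one_le_exp (|Z ω| / C₁); linarith
    calc |Z ω| = C₁ * (|Z ω| / C₁) := by field_simp
      _ ≤ C₁ * Real.exp (|Z ω| / C₁) := by
          exact mul_le_mul_of_nonneg_left h1 hC₁.le

lemma aux_mgf_bound {Z : Ω → ℝ} (hZ : Measurable Z) {C₁ : ℝ} (hC₁ : 0 < C₁)
    (hmean : ∫ ω, Z ω ∂μ = 0)
    (horl : ∫⁻ ω, ENNReal.ofReal (Real.exp (|Z ω| / C₁)) ∂μ ≤ 2)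
    {t : ℝ} (ht : |t| ≤ 1/(2*C₁)) :
    mgf Z μ t ≤ Real.exp (32 * C₁^2 * t^2) ∧
      Integrable (fun ω => Real.exp (t * Z ω)) μ := by
  obtain ⟨hg_int, hg_le, hZ_int⟩ := aux_orlicz_int hZ hC₁ horl
  set g := fun ω => Real.exp (|Z ω| / C₁) with hgdef
  -- pointwise: |t * Z ω| ≤ |Z ω| / (2 C₁)
  have htZ : ∀ ω, |t * Z ω| ≤ |Z ω| / (2*C₁) := by
    intro ω
    rw [abs_mul]
    calc |t| * |Z ω| ≤ (1/(2*C₁)) * |Z ω| := mul_le_mul_of_nonneg_right ht (abs_nonneg _)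
      _ = |Z ω| / (2*C₁) := by ring
  -- pointwise: Z² exp|tZ| ≤ 16 C₁² g
  have hdom : ∀ ω, (Z ω)^2 * Real.exp |t * Z ω| ≤ 16 * C₁^2 * g ω := by
    intro ω
    have h1 : Real.exp |t * Z ω| ≤ Real.exp (|Z ω| / (2*C₁)) := Real.exp_le_exp.2 (htZ ω)
    have h2 : (Z ω)^2 ≤ 16 * C₁^2 * Real.exp (|Z ω| / (2*C₁)) := by
      have hs : 0 ≤ |Z ω| / (2*C₁) := by positivity
      have := aux_sq_le_exp hs
      have hz2 : (Z ω)^2 = (2*C₁)^2 * (|Z ω| / (2*C₁))^2 := by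
        rw [← sq_abs]; field_simp
      rw [hz2]
      nlinarith [Real.exp_pos (|Z ω| / (2*C₁)), sq_nonneg C₁, hC₁]
    have h3 : Real.exp (|Z ω| / (2*C₁)) * Real.exp (|Z ω| / (2*C₁)) = g ω := by
      rw [hgdef, ← Real.exp_add]; congr 1; field_simp; ring
    calc (Z ω)^2 * Real.exp |t * Z ω|
        ≤ (16 * C₁^2 * Real.exp (|Z ω| / (2*C₁))) * Real.exp (|Z ω| / (2*C₁)) := by
          apply mul_le_mul h2 h1 (Real.exp_pos _).le (by positivity)
      _ = 16 * C₁^2 * g ω := by rw [mul_assoc, h3]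
  -- integrability of exp(tZ)
  have hexp_int : Integrable (fun ω => Real.exp (t * Z ω)) μ := by
    refine Integrable.mono' hg_int ((hZ.const_mul t).exp).aestronglyMeasurable
      (Filter.Eventually.of_forall fun ω => ?_)
    rw [Real.norm_eq_abs, abs_of_pos (Real.exp_pos _)]
    apply Real.exp_le_exp.2
    calc t * Z ω ≤ |t * Z ω| := le_abs_self _
      _ ≤ |Z ω| / (2*C₁) := htZ ω
      _ ≤ |Z ω| / C₁ := by
          apply div_le_div_of_nonneg_left (abs_nonneg _) hC₁ (by linarith)
  refine ⟨?_, hexp_int⟩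
  -- integrable upper bound h := 1 + t•Z + 16C₁²t² g
  have hh_int : Integrable (fun ω => 1 + t * Z ω + t^2 * (16 * C₁^2 * g ω)) μ :=
    ((integrable_const 1).add (hZ_int.const_mul t)).add ((hg_int.const_mul _).const_mul _)
  have hpw : ∀ ω, Real.exp (t * Z ω) ≤ 1 + t * Z ω + t^2 * (16 * C₁^2 * g ω) := by
    intro ω
    calc Real.exp (t * Z ω) ≤ 1 + t * Z ω + (t * Z ω)^2 * Real.exp |t * Z ω| :=
          aux_exp_le_quad _
      _ = 1 + t * Z ω + t^2 * ((Z ω)^2 * Real.exp |t * Z ω|) := by ring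
      _ ≤ 1 + t * Z ω + t^2 * (16 * C₁^2 * g ω) := by
          have := mul_le_mul_of_nonneg_left (hdom ω) (sq_nonneg t)
          linarith
  have hmgf : mgf Z μ t ≤ 1 + 32 * C₁^2 * t^2 := by
    rw [mgf]
    calc ∫ ω, Real.exp (t * Z ω) ∂μ
        ≤ ∫ ω, (1 + t * Z ω + t^2 * (16 * C₁^2 * g ω)) ∂μ :=
          integral_mono hexp_int hh_int hpw
      _ = 1 + t * (∫ ω, Z ω ∂μ) + t^2 * (16 * C₁^2 * (∫ ω, g ω ∂μ)) := by
          have i1 : Integrable (fun ω => 1 + t * Z ω) μ := by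
            exact (integrable_const 1).add (hZ_int.const_mul t)
          have i2 : Integrable (fun ω => t^2 * (16 * C₁^2 * g ω)) μ := by
            exact (hg_int.const_mul _).const_mul _
          rw [integral_add i1 i2, integral_add (integrable_const 1) (hZ_int.const_mul t)]
          rw [MeasureTheory.integral_const_mul, MeasureTheory.integral_const_mul,
            MeasureTheory.integral_const_mul, integral_const]
          simp [measure_univ]
      _ = 16 * C₁^2 * t^2 * (∫ ω, g ω ∂μ) + 1 := by rw [hmean]; ring
      _ ≤ 16 * C₁^2 * t^2 * 2 + 1 := by
          have : (0:ℝ) ≤ 16 * C₁^2 * t^2 := by positivity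
          nlinarith [hg_le]
      _ = 1 + 32 * C₁^2 * t^2 := by ring
  calc mgf Z μ t ≤ 1 + 32 * C₁^2 * t^2 := hmgf
    _ ≤ Real.exp (32 * C₁^2 * t^2) := by
        have := Real.add_one_le_exp (32 * C₁^2 * t^2); linarith

lemma aux_bernstein {n : ℕ} {Z : Fin n → Ω → ℝ} (hmeas : ∀ i, Measurable (Z i))
    (hindep : iIndepFun Z μ)
    {i₀ : Fin n} (hid : ∀ i, IdentDistrib (Z i) (Z i₀) μ μ)
    {C₁ : ℝ} (hC₁ : 0 < C₁)
    (hmean : ∫ ω, Z i₀ ω ∂μ = 0)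
    (horl : ∫⁻ ω, ENNReal.ofReal (Real.exp (|Z i₀ ω| / C₁)) ∂μ ≤ 2)
    {ε : ℝ} (hε : 0 < ε) :
    μ {ω | (n:ℝ) * ε ≤ ∑ i, Z i ω} ≤
      ENNReal.ofReal (Real.exp (-((n:ℝ) * min (ε^2/(128*C₁^2)) (ε/(4*C₁))))) := by
  set t := min (ε/(64*C₁^2)) (1/(2*C₁)) with htdef
  have ht0 : 0 < t := lt_min (by positivity) (by positivity)
  have ht : |t| ≤ 1/(2*C₁) := by
    rw [abs_of_pos ht0]; exact min_le_right _ _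
  obtain ⟨hmgf0, hint0⟩ := aux_mgf_bound (hmeas i₀) hC₁ hmean horl ht
  have hexpmeas : Measurable (fun z : ℝ => Real.exp (t * z)) :=
    (measurable_id.const_mul t).exp
  -- each exp(t Z i) integrable, mgf equal
  have hint : ∀ i, Integrable (fun ω => Real.exp (t * Z i ω)) μ := fun i =>
    ((hid i).comp hexpmeas).integrable_iff.2 hint0
  have hmgf : ∀ i, mgf (Z i) μ t = mgf (Z i₀) μ t := fun i =>
    ((hid i).comp hexpmeas).integral_eq
  -- Chernoff
  have hsum_int : Integrable (fun ω => Real.exp (t * (∑ i, Z i) ω)) μ :=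
    hindep.integrable_exp_mul_sum hmeas (fun i _ => hint i)
  have hch := measure_ge_le_exp_mul_mgf (X := ∑ i, Z i) (μ := μ) ((n:ℝ) * ε) ht0.le hsum_int
  have hset : {ω | (n:ℝ) * ε ≤ ∑ i, Z i ω} = {ω | (n:ℝ) * ε ≤ (∑ i, Z i) ω} := by
    ext ω; simp [Finset.sum_apply]
  have hprod : mgf (∑ i, Z i) μ t ≤ Real.exp (32 * C₁^2 * t^2) ^ n := by
    rw [hindep.mgf_sum hmeas]
    calc ∏ i, mgf (Z i) μ t = ∏ _i : Fin n, mgf (Z i₀) μ t := by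
          exact Finset.prod_congr rfl fun i _ => hmgf i
      _ = mgf (Z i₀) μ t ^ n := by rw [Finset.prod_const, Finset.card_univ, Fintype.card_fin]
      _ ≤ Real.exp (32 * C₁^2 * t^2) ^ n := pow_le_pow_left₀ (mgf_nonneg) hmgf0 n
  have hbound : (μ {ω | (n:ℝ) * ε ≤ ∑ i, Z i ω}).toReal ≤
      Real.exp (-((n:ℝ) * min (ε^2/(128*C₁^2)) (ε/(4*C₁)))) := by
    rw [hset]
    calc (μ {ω | (n:ℝ) * ε ≤ (∑ i, Z i) ω}).toReal
        ≤ Real.exp (-t * ((n:ℝ)*ε)) * mgf (∑ i, Z i) μ t := hch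
      _ ≤ Real.exp (-t * ((n:ℝ)*ε)) * Real.exp (32 * C₁^2 * t^2) ^ n := by
          exact mul_le_mul_of_nonneg_left hprod (Real.exp_pos _).le
      _ = Real.exp ((n:ℝ) * (32 * C₁^2 * t^2 - t * ε)) := by
          rw [← Real.exp_nat_mul, ← Real.exp_add]; ring_nf
      _ ≤ Real.exp (-((n:ℝ) * min (ε^2/(128*C₁^2)) (ε/(4*C₁)))) := by
          apply Real.exp_le_exp.2
          have key : 32 * C₁^2 * t^2 - t * ε ≤ -min (ε^2/(128*C₁^2)) (ε/(4*C₁)) := by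
            have h1 : 32 * C₁^2 * t^2 ≤ t * ε / 2 := by
              have ht1 : t ≤ ε/(64*C₁^2) := min_le_left _ _
              have hpos : (0:ℝ) ≤ 32*C₁^2*t := by positivity
              have hmm := mul_le_mul_of_nonneg_left ht1 hpos
              have e : 32*C₁^2*t*(ε/(64*C₁^2)) = t*ε/2 := by field_simp; ring
              calc 32*C₁^2*t^2 = 32*C₁^2*t*t := by ring
                _ ≤ 32*C₁^2*t*(ε/(64*C₁^2)) := hmm
                _ = t*ε/2 := e
            have hA : ε^2/(128*C₁^2) = (ε/(64*C₁^2))*ε/2 := by field_simp; ring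
            have hB : ε/(4*C₁) = (1/(2*C₁))*ε/2 := by ring
            have h2 : min (ε^2/(128*C₁^2)) (ε/(4*C₁)) ≤ t * ε / 2 := by
              rcases min_cases (ε/(64*C₁^2)) (1/(2*C₁)) with ⟨heq, _⟩ | ⟨heq, _⟩
              · calc min (ε^2/(128*C₁^2)) (ε/(4*C₁)) ≤ ε^2/(128*C₁^2) := min_le_left _ _
                  _ = t*ε/2 := by rw [htdef, heq]; exact hA
              · calc min (ε^2/(128*C₁^2)) (ε/(4*C₁)) ≤ ε/(4*C₁) := min_le_right _ _
                  _ = t*ε/2 := by rw [htdef, heq]; exact hB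
            linarith
          have hn0 : (0:ℝ) ≤ (n:ℝ) := Nat.cast_nonneg n
          nlinarith [key, hn0]
  rw [← ENNReal.ofReal_toReal (measure_ne_top μ _)]
  exact ENNReal.ofReal_le_ofReal hbound

lemma aux_pair {n : ℕ} (hn : 0 < n) (W : Fin n → Ω → ℝ) (hmeas : ∀ i, Measurable (W i))
    (hindep : iIndepFun W μ)
    {i₀ : Fin n} (hid : ∀ i, IdentDistrib (W i) (W i₀) μ μ)
    {C₁ : ℝ} (hC₁ : 0 < C₁)
    (horl : ∫⁻ ω, ENNReal.ofReal (Real.exp (|W i₀ ω - ∫ ω', W i₀ ω' ∂μ| / C₁)) ∂μ ≤ 2)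
    {ε : ℝ} (hε : 0 < ε) :
    μ {ω | ε < |(n:ℝ)⁻¹ * (∑ i, W i ω) - ∫ ω', W i₀ ω' ∂μ|} ≤
      ENNReal.ofReal (Real.exp (-((n:ℝ) * min (ε^2/(128*C₁^2)) (ε/(4*C₁))))) +
      ENNReal.ofReal (Real.exp (-((n:ℝ) * min (ε^2/(128*C₁^2)) (ε/(4*C₁))))) := by
  have hn0 : (0:ℝ) < (n:ℝ) := by exact_mod_cast hn
  set M := ∫ ω', W i₀ ω' ∂μ with hM
  set Z : Fin n → Ω → ℝ := fun i ω => W i ω - M with hZ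
  have hZmeas : ∀ i, Measurable (Z i) := fun i => (hmeas i).sub measurable_const
  have hZindep : iIndepFun Z μ := by
    have := hindep.comp (fun _ : Fin n => fun y : ℝ => y - M)
      (fun _ => measurable_id.sub measurable_const)
    exact this
  have hZid : ∀ i, IdentDistrib (Z i) (Z i₀) μ μ := fun i =>
    (hid i).comp (measurable_id.sub measurable_const)
  have horlZ : ∫⁻ ω, ENNReal.ofReal (Real.exp (|Z i₀ ω| / C₁)) ∂μ ≤ 2 := horl
  have hZint : Integrable (Z i₀) μ := (aux_orlicz_int (hZmeas i₀) hC₁ horlZ).2.2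
  have hWint : Integrable (W i₀) μ := by
    have h2 := (hZint.add (integrable_const M))
    exact h2.congr (Filter.Eventually.of_forall fun ω => by simp [hZ])
  have hZmean : ∫ ω, Z i₀ ω ∂μ = 0 := by
    rw [hZ]
    simp only
    rw [integral_sub hWint (integrable_const M), integral_const]
    simp [hM]
  -- negated family
  have hNmeas : ∀ i, Measurable (fun ω => -(Z i ω)) := fun i => (hZmeas i).neg
  have hNindep : iIndepFun (fun i => fun ω => -(Z i ω)) μ := by
    have := hZindep.comp (fun _ : Fin n => fun y : ℝ => -y) (fun _ => measurable_neg)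
    exact this
  have hNid : ∀ i, IdentDistrib (fun ω => -(Z i ω)) (fun ω => -(Z i₀ ω)) μ μ := fun i =>
    (hZid i).comp measurable_neg
  have hNmean : ∫ ω, -(Z i₀ ω) ∂μ = 0 := by
    rw [integral_neg, hZmean, neg_zero]
  have hNorl : ∫⁻ ω, ENNReal.ofReal (Real.exp (|-(Z i₀ ω)| / C₁)) ∂μ ≤ 2 := by
    simpa only [abs_neg] using horlZ
  have tail1 := aux_bernstein hZmeas hZindep hZid hC₁ hZmean horlZ hε
  have tail2 := aux_bernstein hNmeas hNindep hNid hC₁ hNmean hNorl hε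
  have hsub : {ω | ε < |(n:ℝ)⁻¹ * (∑ i, W i ω) - M|} ⊆
      {ω | (n:ℝ) * ε ≤ ∑ i, Z i ω} ∪ {ω | (n:ℝ) * ε ≤ ∑ i, -(Z i ω)} := by
    intro ω hω
    simp only [Set.mem_setOf_eq] at hω
    have hiden : (n:ℝ)⁻¹ * (∑ i, W i ω) - M = (n:ℝ)⁻¹ * ∑ i, Z i ω := by
      rw [hZ]
      simp only
      rw [Finset.sum_sub_distrib, Finset.sum_const, Finset.card_univ, Fintype.card_fin,
        nsmul_eq_mul]
      field_simp
    rw [hiden] at hω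
    have habs : (n:ℝ) * ε < |∑ i, Z i ω| := by
      rw [abs_mul, abs_inv, Nat.abs_cast] at hω
      calc (n:ℝ) * ε < (n:ℝ) * ((n:ℝ)⁻¹ * |∑ i, Z i ω|) := by
            exact mul_lt_mul_of_pos_left hω hn0
        _ = |∑ i, Z i ω| := by field_simp
    rcases abs_cases (∑ i, Z i ω) with ⟨heq, _⟩ | ⟨heq, _⟩
    · left
      simp only [Set.mem_setOf_eq]
      rw [heq] at habs; linarith
    · right
      simp only [Set.mem_setOf_eq, Finset.sum_neg_distrib]
      rw [heq] at habs; linarith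
  calc μ {ω | ε < |(n:ℝ)⁻¹ * (∑ i, W i ω) - M|}
      ≤ μ ({ω | (n:ℝ) * ε ≤ ∑ i, Z i ω} ∪ {ω | (n:ℝ) * ε ≤ ∑ i, -(Z i ω)}) :=
        measure_mono hsub
    _ ≤ μ {ω | (n:ℝ) * ε ≤ ∑ i, Z i ω} + μ {ω | (n:ℝ) * ε ≤ ∑ i, -(Z i ω)} :=
        measure_union_le _ _
    _ ≤ _ := add_le_add tail1 tail2

end BernsteinAux

lemma aux_quad {n p : ℕ} (X : Fin n → Fin p → ℝ) (m : Fin p → Fin p → ℝ) (v : Fin p → ℝ) :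
    (n:ℝ)⁻¹ * (∑ i, (∑ j, X i j * v j)^2) - ∑ j, ∑ k', v j * m j k' * v k'
      = ∑ j, ∑ k', v j * ((n:ℝ)⁻¹ * (∑ i, X i j * X i k') - m j k') * v k' := by
  have e1 : ∀ i, (∑ j, X i j * v j)^2 = ∑ j, ∑ k', (X i j * v j) * (X i k' * v k') := by
    intro i; rw [sq, Finset.sum_mul_sum]
  have e2 : (∑ i, (∑ j, X i j * v j)^2)
      = ∑ j, ∑ k', ∑ i, (X i j * v j) * (X i k' * v k') := by
    simp_rw [e1]
    rw [Finset.sum_comm]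
    exact Finset.sum_congr rfl fun j _ => Finset.sum_comm
  rw [e2]
  rw [Finset.mul_sum, ← Finset.sum_sub_distrib]
  refine Finset.sum_congr rfl fun j _ => ?_
  rw [Finset.mul_sum, ← Finset.sum_sub_distrib]
  refine Finset.sum_congr rfl fun k' _ => ?_
  have e3 : ∑ i, (X i j * v j) * (X i k' * v k') = v j * v k' * ∑ i, X i j * X i k' := by
    rw [Finset.mul_sum]
    exact Finset.sum_congr rfl fun i _ => by ring
  rw [e3]; ring

lemma aux_sparse_bound {p : ℕ} (v : Fin p → ℝ) (a : Fin p → Fin p → ℝ) {ε : ℝ} (hε : 0 ≤ ε)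
    (ha : ∀ j k', |a j k'| ≤ ε) {s : ℕ}
    (hcard : (Finset.univ.filter fun j => v j ≠ 0).card ≤ s)
    (hnorm : (∑ j, v j ^ 2) ≤ 1) :
    |∑ j, ∑ k', v j * a j k' * v k'| ≤ ε * s := by
  classical
  set S := Finset.univ.filter fun j => v j ≠ 0 with hS
  have habs : |∑ j, ∑ k', v j * a j k' * v k'| ≤ ∑ j, ∑ k', |v j| * ε * |v k'| := by
    refine (Finset.abs_sum_le_sum_abs _ _).trans (Finset.sum_le_sum fun j _ => ?_)
    refine (Finset.abs_sum_le_sum_abs _ _).trans (Finset.sum_le_sum fun k' _ => ?_)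
    rw [abs_mul, abs_mul]
    exact mul_le_mul_of_nonneg_right
      (mul_le_mul_of_nonneg_left (ha j k') (abs_nonneg _)) (abs_nonneg _)
  have hsum : ∑ j, ∑ k', |v j| * ε * |v k'| = ε * (∑ j, |v j|)^2 := by
    rw [sq, Finset.sum_mul_sum, Finset.mul_sum]
    refine Finset.sum_congr rfl fun j _ => ?_
    rw [Finset.mul_sum]
    exact Finset.sum_congr rfl fun k' _ => by ring
  have h1 : (∑ j, |v j|) = ∑ j ∈ S, |v j| := by
    refine (Finset.sum_subset (Finset.subset_univ S) fun j _ hj => ?_).symm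
    rw [hS] at hj
    simp only [Finset.mem_filter, Finset.mem_univ, true_and, not_not] at hj
    simp [hj]
  have h2 : (∑ j ∈ S, |v j|)^2 ≤ (S.card : ℝ) * ∑ j ∈ S, |v j|^2 :=
    sq_sum_le_card_mul_sum_sq
  have h3 : (∑ j ∈ S, |v j|^2) ≤ ∑ j, v j^2 := by
    simp_rw [sq_abs]
    exact Finset.sum_le_sum_of_subset_of_nonneg (Finset.subset_univ S)
      (fun j _ _ => sq_nonneg _)
  have h4 : (∑ j, |v j|)^2 ≤ (s : ℝ) := by
    rw [h1]
    calc (∑ j ∈ S, |v j|)^2 ≤ (S.card : ℝ) * ∑ j ∈ S, |v j|^2 := h2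
      _ ≤ (s : ℝ) * 1 := by
          apply mul_le_mul (by exact_mod_cast hcard) (h3.trans hnorm)
            (Finset.sum_nonneg fun j _ => sq_nonneg _) (Nat.cast_nonneg s)
      _ = (s : ℝ) := mul_one _
  calc |∑ j, ∑ k', v j * a j k' * v k'| ≤ ∑ j, ∑ k', |v j| * ε * |v k'| := habs
    _ = ε * (∑ j, |v j|)^2 := hsum
    _ ≤ ε * s := mul_le_mul_of_nonneg_left h4 hε

set_option maxHeartbeats 1000000 in
lemma aux_arith {δ C₁ C₂ : ℝ} (hδ : 0 < δ) (hC₁ : 0 < C₁) (hC₂ : 0 < C₂)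
    {n p k : ℕ} (hn : 1 ≤ n) (hp : 2 ≤ p) (hk : 1 ≤ k)
    (hcond : (2*(k:ℝ)*Real.log p)^7 ≤ C₂ * (n:ℝ)) :
    (p:ℝ) * ((p:ℝ) * (Real.exp (-((n:ℝ) * min ((δ/(2*(k:ℝ)))^2/(128*C₁^2)) ((δ/(2*(k:ℝ)))/(4*C₁)))) +
      Real.exp (-((n:ℝ) * min ((δ/(2*(k:ℝ)))^2/(128*C₁^2)) ((δ/(2*(k:ℝ)))/(4*C₁)))))) ≤
    (2 * Real.exp ((4 / (32 * min (δ^2/(128*C₁^2)) (δ/(4*C₁)) / C₂)) ^ ((1:ℝ)/6)) ^ 2 *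
        ((C₂ / (Real.log 2)^7) ^ ((2:ℝ)/7)) / (min (δ^2/(128*C₁^2)) (δ/(4*C₁)))) * (n:ℝ)^(-((5:ℝ)/7)) +
      Real.exp (-(1:ℝ) * Real.log p) := by
  have hα0 : 0 < min (δ^2/(128*C₁^2)) (δ/(4*C₁)) := lt_min (by positivity) (by positivity)
  set α := min (δ^2/(128*C₁^2)) (δ/(4*C₁)) with hαdef
  set K2 : ℝ := 2*(k:ℝ) with hK2def
  have hK2 : (2:ℝ) ≤ K2 := by
    rw [hK2def]; have : (1:ℝ) ≤ (k:ℝ) := by exact_mod_cast hk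
    linarith
  have hK20 : (0:ℝ) < K2 := by linarith
  have hn0 : (0:ℝ) < (n:ℝ) := by exact_mod_cast Nat.lt_of_lt_of_le Nat.zero_lt_one hn
  have hn1 : (1:ℝ) ≤ (n:ℝ) := by exact_mod_cast hn
  have hp0 : (0:ℝ) < (p:ℝ) := by positivity
  have hlog2 : (0:ℝ) < Real.log 2 := Real.log_pos (by norm_num)
  set L := Real.log (p:ℝ) with hLdef
  have hL2 : Real.log 2 ≤ L := by
    rw [hLdef]; apply Real.log_le_log (by norm_num)
    exact_mod_cast hp
  have hL0 : (0:ℝ) < L := lt_of_lt_of_le hlog2 hL2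
  set E := (n:ℝ) * min ((δ/K2)^2/(128*C₁^2)) ((δ/K2)/(4*C₁)) with hEdef
  have hpexp : (p:ℝ) = Real.exp L := (Real.exp_log hp0).symm
  -- Step 1 : α / K2^2 ≤ min (...)
  have hstep1 : α / K2^2 ≤ min ((δ/K2)^2/(128*C₁^2)) ((δ/K2)/(4*C₁)) := by
    apply le_min
    · have e : (δ/K2)^2/(128*C₁^2) = (δ^2/(128*C₁^2))/K2^2 := by
        field_simp
      rw [e]
      exact div_le_div_of_nonneg_right (min_le_left _ _) (by positivity)
    · have e : (δ/K2)/(4*C₁) = (δ/(4*C₁))/K2 := by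
        rw [div_div, div_div, mul_comm]
      rw [e]
      calc α/K2^2 ≤ (δ/(4*C₁))/K2^2 :=
            div_le_div_of_nonneg_right (min_le_right _ _) (by positivity)
        _ ≤ (δ/(4*C₁))/K2 := by
            apply div_le_div_of_nonneg_left (by positivity) hK20
            nlinarith
  have hE1 : α / K2^2 * (n:ℝ) ≤ E := by
    calc α / K2^2 * (n:ℝ) ≤ (min ((δ/K2)^2/(128*C₁^2)) ((δ/K2)/(4*C₁))) * (n:ℝ) :=
          mul_le_mul_of_nonneg_right hstep1 hn0.le
      _ = E := by rw [hEdef]; ring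
  have hE0 : 0 < E :=
    lt_of_lt_of_le (by positivity) hE1
  have hKL7 : K2^7 * L^7 ≤ C₂ * (n:ℝ) := by
    calc K2^7 * L^7 = (K2*L)^7 := by ring
      _ ≤ C₂ * (n:ℝ) := hcond
  -- LHS rewrite
  have hLHS : (p:ℝ) * ((p:ℝ) * (Real.exp (-E) + Real.exp (-E))) = 2 * Real.exp (2*L - E) := by
    have he : Real.exp (2*L - E) = Real.exp L * Real.exp L * Real.exp (-E) := by
      rw [← Real.exp_add, ← Real.exp_add]; ring_nf
    rw [hpexp, he]; ring
  rcases le_or_gt 4 (32*α/C₂ * L^6) with hcase | hcase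
  · -- Case A : big p, exp(-L) term dominates
    have hE4L : 4*L ≤ E := by
      have h1 : K2^7*L^7/C₂ ≤ (n:ℝ) := by
        rw [div_le_iff₀ hC₂]; linarith [hKL7]
      have h2 : α/K2^2 * (K2^7*L^7/C₂) ≤ α/K2^2 * (n:ℝ) :=
        mul_le_mul_of_nonneg_left h1 (by positivity)
      have h3 : α/K2^2 * (K2^7*L^7/C₂) = (α/C₂) * K2^5 * L^7 := by
        field_simp
      have h4 : (32:ℝ) ≤ K2^5 := by
        calc (32:ℝ) = 2^5 := by norm_num
          _ ≤ K2^5 := by gcongr <;> norm_num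
      have h5 : (32*α/C₂) * L^7 ≤ (α/C₂) * K2^5 * L^7 := by
        have : (32*α/C₂) ≤ (α/C₂) * K2^5 := by
          rw [show (32:ℝ)*α/C₂ = (α/C₂) * 32 by ring]
          exact mul_le_mul_of_nonneg_left h4 (by positivity)
        exact mul_le_mul_of_nonneg_right this (by positivity)
      have h6 : 4*L ≤ (32*α/C₂) * L^7 := by
        nlinarith [mul_le_mul_of_nonneg_right hcase hL0.le]
      linarith
    have hfinal : 2 * Real.exp (2*L - E) ≤ Real.exp (-(1:ℝ)*L) := by
      have h2 : 2 * Real.exp (2*L - E) = Real.exp (Real.log 2 + (2*L - E)) := by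
        rw [Real.exp_add, Real.exp_log (by norm_num : (0:ℝ) < 2)]
      rw [h2]
      apply Real.exp_le_exp.2
      linarith
    rw [hLHS]
    calc 2 * Real.exp (2*L - E) ≤ Real.exp (-(1:ℝ)*L) := hfinal
      _ ≤ _ := by
          apply le_add_of_nonneg_left
          positivity
  · -- Case B : small p, polynomial term dominates
    set γ := 32*α/C₂ with hγdef
    have hγ0 : 0 < γ := by positivity
    have hL6 : L^6 ≤ 4/γ := by
      have h1 : γ * L^6 ≤ 4 := hcase.le
      calc L^6 = γ * L^6 / γ := by field_simp
        _ ≤ 4/γ := by gcongr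
    have hLL0 : L ≤ (4/γ) ^ ((1:ℝ)/6) := by
      have h1 : ((L^(6:ℕ):ℝ)) ^ ((1:ℝ)/6) ≤ (4/γ) ^ ((1:ℝ)/6) :=
        Real.rpow_le_rpow (by positivity) hL6 (by norm_num)
      rwa [← Real.rpow_natCast L 6, ← Real.rpow_mul hL0.le, show ((6:ℕ):ℝ) * ((1:ℝ)/6) = 1 by norm_num,
        Real.rpow_one] at h1
    have hpP0 : (p:ℝ) ≤ Real.exp ((4/γ) ^ ((1:ℝ)/6)) := by
      rw [hpexp]; exact Real.exp_le_exp.2 hLL0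
    -- K2^2 ≤ D * n^(2/7)
    have hK27 : K2^7 ≤ C₂ * (n:ℝ) / (Real.log 2)^7 := by
      rw [le_div_iff₀ (pow_pos hlog2 7)]
      calc K2^7 * (Real.log 2)^7 ≤ K2^7 * L^7 :=
            mul_le_mul_of_nonneg_left (pow_le_pow_left₀ hlog2.le hL2 7) (pow_nonneg hK20.le 7)
          _ ≤ C₂ * (n:ℝ) := hKL7
    have hK22 : K2^2 ≤ (C₂/(Real.log 2)^7) ^ ((2:ℝ)/7) * (n:ℝ)^((2:ℝ)/7) := by
      have h1 : ((K2^(7:ℕ):ℝ)) ^ ((2:ℝ)/7) ≤ (C₂ * (n:ℝ) / (Real.log 2)^7) ^ ((2:ℝ)/7) :=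
        Real.rpow_le_rpow (by positivity) hK27 (by norm_num)
      have h2 : ((K2^(7:ℕ):ℝ)) ^ ((2:ℝ)/7) = K2^2 := by
        rw [← Real.rpow_natCast K2 7, ← Real.rpow_mul hK20.le,
          show ((7:ℕ):ℝ) * ((2:ℝ)/7) = 2 by norm_num]
        rw [show (2:ℝ) = ((2:ℕ):ℝ) by norm_num, Real.rpow_natCast]
      have h3 : (C₂ * (n:ℝ) / (Real.log 2)^7) ^ ((2:ℝ)/7)
          = (C₂/(Real.log 2)^7) ^ ((2:ℝ)/7) * (n:ℝ)^((2:ℝ)/7) := by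
        rw [show C₂ * (n:ℝ) / (Real.log 2)^7 = (C₂/(Real.log 2)^7) * (n:ℝ) by ring]
        exact Real.mul_rpow (by positivity) (by positivity)
      rw [h2, h3] at h1; exact h1
    set D := (C₂/(Real.log 2)^7) ^ ((2:ℝ)/7) with hDdef
    have hD0 : 0 < D := Real.rpow_pos_of_pos (by positivity) _
    -- E ≥ (α/D) * n^(5/7)
    have hE2 : α/D * (n:ℝ)^((5:ℝ)/7) ≤ E := by
      have h1 : α/(D * (n:ℝ)^((2:ℝ)/7)) * (n:ℝ) ≤ α/K2^2 * (n:ℝ) := by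
        apply mul_le_mul_of_nonneg_right _ hn0.le
        apply div_le_div_of_nonneg_left hα0.le (by positivity)
        exact hK22
      have h2 : α/(D * (n:ℝ)^((2:ℝ)/7)) * (n:ℝ) = α/D * ((n:ℝ) / (n:ℝ)^((2:ℝ)/7)) := by
        field_simp
      have h3 : (n:ℝ) / (n:ℝ)^((2:ℝ)/7) = (n:ℝ)^((5:ℝ)/7) := by
        rw [show ((5:ℝ)/7) = 1 - (2:ℝ)/7 by norm_num, Real.rpow_sub hn0, Real.rpow_one]
      rw [h2, h3] at h1
      linarith [hE1]
    have hEexp : Real.exp (-E) ≤ D/α * (n:ℝ)^(-((5:ℝ)/7)) := by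
      have h1 : E ≤ Real.exp E := by
        have := Real.add_one_le_exp E; linarith
      have h2 : Real.exp (-E) = (Real.exp E)⁻¹ := Real.exp_neg E
      have h3 : (Real.exp E)⁻¹ ≤ E⁻¹ := by
        apply inv_anti₀ hE0 h1
      have hE2' : 0 < α/D * (n:ℝ)^((5:ℝ)/7) := by positivity
      have h4 : E⁻¹ ≤ (α/D * (n:ℝ)^((5:ℝ)/7))⁻¹ := by
        apply inv_anti₀ hE2' hE2
      have h5 : (α/D * (n:ℝ)^((5:ℝ)/7))⁻¹ = D/α * (n:ℝ)^(-((5:ℝ)/7)) := by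
        rw [mul_inv, inv_div, Real.rpow_neg hn0.le]
      rw [h2]; rw [h5] at h4; linarith
    -- assemble
    set P0 := Real.exp ((4/γ) ^ ((1:ℝ)/6)) with hP0def
    have hP00 : 0 < P0 := Real.exp_pos _
    have hmain : (p:ℝ) * ((p:ℝ) * (Real.exp (-E) + Real.exp (-E)))
        ≤ (2 * P0^2 * D / α) * (n:ℝ)^(-((5:ℝ)/7)) := by
      have hpe : 0 ≤ Real.exp (-E) := (Real.exp_pos _).le
      calc (p:ℝ) * ((p:ℝ) * (Real.exp (-E) + Real.exp (-E)))
          = 2 * ((p:ℝ) * (p:ℝ)) * Real.exp (-E) := by ring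
        _ ≤ 2 * (P0 * P0) * (D/α * (n:ℝ)^(-((5:ℝ)/7))) := by
            apply mul_le_mul _ hEexp hpe (by positivity)
            have := mul_le_mul hpP0 hpP0 hp0.le hP00.le
            nlinarith
        _ = (2 * P0^2 * D / α) * (n:ℝ)^(-((5:ℝ)/7)) := by ring
    calc (p:ℝ) * ((p:ℝ) * (Real.exp (-E) + Real.exp (-E)))
        ≤ (2 * P0^2 * D / α) * (n:ℝ)^(-((5:ℝ)/7)) := hmain
      _ ≤ _ := by
          have hnn : (0:ℝ) ≤ Real.exp (-(1:ℝ)*L) := (Real.exp_pos _).le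
          have heq : (2 * P0^2 * D / α)
              = 2 * Real.exp ((4 / (32 * α / C₂)) ^ ((1:ℝ)/6)) ^ 2 *
                ((C₂ / (Real.log 2)^7) ^ ((2:ℝ)/7)) / α := by
            rw [hP0def, hγdef, hDdef]
          rw [heq]
          linarith

/-- Lemma `LemCovering`. Let `Γ = XᵀX/n − Σ_x` with i.i.d. zero-mean rows
satisfying (A1)–(A3). For any fixed `δ > 0`, if `(2k log p)⁷/n ≤ C₂ n^{−c₂}`, then with
probability at least `1 − C n^{−c} − exp(−c' log p)`, `|vᵀΓv| ≤ δ` simultaneously for all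
`2k`-sparse vectors `v` with `‖v‖₂ ≤ 1`. -/
theorem stmt12 :
    ∃ C c c' : ℝ → ℝ → ℝ → ℝ → ℝ → ℝ → ℝ,
      (∀ δ c₁ c₂ C₁ C₂ σxx : ℝ, 0 < δ → 0 < c₁ → 0 < c₂ → 0 < C₁ → 0 < C₂ → 0 < σxx →
        0 < C δ c₁ c₂ C₁ C₂ σxx ∧ 0 < c δ c₁ c₂ C₁ C₂ σxx ∧ 0 < c' δ c₁ c₂ C₁ C₂ σxx) ∧
      ∀ (Ω : Type) (_ : MeasurableSpace Ω) (μ : Measure Ω), IsProbabilityMeasure μ →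
      ∀ (n p k : ℕ) (hn : 0 < n), 0 < p →
      ∀ (x : Fin n → Ω → Fin p → ℝ) (δ c₁ c₂ C₁ C₂ σxx : ℝ),
      0 < δ → 0 < c₁ → 0 < c₂ → 0 < C₁ → 0 < C₂ → 0 < σxx →
      (∀ i, Measurable (x i)) →
      iIndepFun x μ →
      (∀ i, IdentDistrib (x i) (x ⟨0, hn⟩) μ μ) →
      (∀ i j, ∫ ω, x i ω j ∂μ = 0) →
      (∀ j k' : Fin p, c₁ ≤ variance (fun ω => x ⟨0, hn⟩ ω j * x ⟨0, hn⟩ ω k') μ) →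
      (∀ j k' : Fin p,
        ∫⁻ ω, ENNReal.ofReal (Real.exp
            (|x ⟨0, hn⟩ ω j * x ⟨0, hn⟩ ω k' -
              ∫ ω', x ⟨0, hn⟩ ω' j * x ⟨0, hn⟩ ω' k' ∂μ| / C₁)) ∂μ ≤ 2) →
      (∀ j k' : Fin p, variance (fun ω => x ⟨0, hn⟩ ω j * x ⟨0, hn⟩ ω k') μ ≤ σxx ^ 2) →
      -- sample-size condition
      (2 * (k : ℝ) * Real.log p) ^ 7 / n ≤ C₂ * (n : ℝ) ^ (-c₂) →
      ENNReal.ofReal (1 - C δ c₁ c₂ C₁ C₂ σxx * (n : ℝ) ^ (-(c δ c₁ c₂ C₁ C₂ σxx)) -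
          Real.exp (-(c' δ c₁ c₂ C₁ C₂ σxx) * Real.log p)) ≤
        μ {ω | ∀ v : Fin p → ℝ,
            (Finset.univ.filter fun j => v j ≠ 0).card ≤ 2 * k →
            (∑ j, v j ^ 2) ≤ 1 →
            |(n : ℝ)⁻¹ * (∑ i, (∑ j, x i ω j * v j) ^ 2) -
              ∑ j, ∑ k', v j * (∫ ω', x ⟨0, hn⟩ ω' j * x ⟨0, hn⟩ ω' k' ∂μ) * v k'| ≤ δ} := by
  refine ⟨fun δ _ _ C₁ C₂ _ =>
      2 * Real.exp ((4 / (32 * min (δ^2/(128*C₁^2)) (δ/(4*C₁)) / C₂)) ^ ((1:ℝ)/6)) ^ 2 *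
        ((C₂ / (Real.log 2)^7) ^ ((2:ℝ)/7)) / (min (δ^2/(128*C₁^2)) (δ/(4*C₁))),
    fun _ _ _ _ _ _ => (5:ℝ)/7, fun _ _ _ _ _ _ => 1, ?_, ?_⟩
  · intro δ c₁ c₂ C₁ C₂ σxx hδ hc₁ hc₂ hC₁ hC₂ hσ
    have hα0 : 0 < min (δ^2/(128*C₁^2)) (δ/(4*C₁)) := lt_min (by positivity) (by positivity)
    have hlog2 : (0:ℝ) < Real.log 2 := Real.log_pos (by norm_num)
    refine ⟨?_, by norm_num, by norm_num⟩
    exact div_pos (mul_pos (mul_pos (by norm_num) (pow_pos (Real.exp_pos _) 2))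
      (Real.rpow_pos_of_pos (div_pos hC₂ (pow_pos hlog2 7)) _)) hα0
  intro Ω mΩ μ hμ n p k hn hp x δ c₁ c₂ C₁ C₂ σxx hδ hc₁ hc₂ hC₁ hC₂ hσ hxm hxind hxid
    hxmean hvarlo horl hvarhi hcond
  simp only []
  set Cval := 2 * Real.exp ((4 / (32 * min (δ^2/(128*C₁^2)) (δ/(4*C₁)) / C₂)) ^ ((1:ℝ)/6)) ^ 2 *
      ((C₂ / (Real.log 2)^7) ^ ((2:ℝ)/7)) / (min (δ^2/(128*C₁^2)) (δ/(4*C₁))) with hCvaldef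
  have hα0 : 0 < min (δ^2/(128*C₁^2)) (δ/(4*C₁)) := lt_min (by positivity) (by positivity)
  have hlog2 : (0:ℝ) < Real.log 2 := Real.log_pos (by norm_num)
  have hCval0 : 0 < Cval := by
    rw [hCvaldef]
    exact div_pos (mul_pos (mul_pos (by norm_num) (pow_pos (Real.exp_pos _) 2))
      (Real.rpow_pos_of_pos (div_pos hC₂ (pow_pos hlog2 7)) _)) hα0
  have hn0 : (0:ℝ) < (n:ℝ) := by exact_mod_cast hn
  have hn1 : (1:ℝ) ≤ (n:ℝ) := by exact_mod_cast hn
  have hrpow0 : (0:ℝ) ≤ Cval * (n:ℝ) ^ (-((5:ℝ)/7)) :=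
    mul_nonneg hCval0.le (Real.rpow_nonneg hn0.le _)
  -- Case k = 0 : the event is everything
  rcases Nat.eq_zero_or_pos k with rfl | hk1
  · have hT : {ω : Ω | ∀ v : Fin p → ℝ,
        (Finset.univ.filter fun j => v j ≠ 0).card ≤ 2 * 0 →
        (∑ j, v j ^ 2) ≤ 1 →
        |(n : ℝ)⁻¹ * (∑ i, (∑ j, x i ω j * v j) ^ 2) -
          ∑ j, ∑ k', v j * (∫ ω', x ⟨0, hn⟩ ω' j * x ⟨0, hn⟩ ω' k' ∂μ) * v k'| ≤ δ}
        = Set.univ := by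
      ext ω
      simp only [Set.mem_setOf_eq, Set.mem_univ, iff_true]
      intro v hcard _
      have hv : ∀ j, v j = 0 := by
        intro j
        by_contra hvj
        have hj : j ∈ Finset.univ.filter (fun j => v j ≠ 0) := by simp [hvj]
        have := Finset.card_pos.2 ⟨j, hj⟩
        omega
      simp only [hv, mul_zero, zero_mul, Finset.sum_const_zero]
      simp only [ne_eq, zero_pow, mul_zero, Finset.sum_const_zero, sub_zero, abs_zero]
      simpa using hδ.le
    rw [hT, measure_univ]
    apply ENNReal.ofReal_le_one.2
    have : (0:ℝ) ≤ Real.exp (-(1:ℝ) * Real.log p) := (Real.exp_pos _).le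
    linarith
  -- Case p = 1 : bound is vacuous
  rcases lt_or_ge p 2 with hp2 | hp2
  · have hp1 : p = 1 := by omega
    subst hp1
    have : Real.log ((1:ℕ):ℝ) = 0 := by norm_num
    rw [this]
    rw [show -(1:ℝ) * 0 = 0 by ring, Real.exp_zero]
    rw [ENNReal.ofReal_of_nonpos (by linarith)]
    exact zero_le
  -- Main case : k ≥ 1, p ≥ 2
  have hk0 : (0:ℝ) < (k:ℝ) := by exact_mod_cast hk1
  have hε0 : 0 < δ / (2*(k:ℝ)) := by positivity
  have hp0 : (0:ℝ) < (p:ℝ) := by positivity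
  -- sample-size condition simplification
  have hcond' : (2*(k:ℝ)*Real.log p)^7 ≤ C₂ * n := by
    have h1 : (n:ℝ)^(-c₂) ≤ 1 :=
      Real.rpow_le_one_of_one_le_of_nonpos hn1 (by linarith)
    have h2 : (2*(k:ℝ)*Real.log p)^7 / n ≤ C₂ := by
      calc (2*(k:ℝ)*Real.log p)^7 / n ≤ C₂ * (n:ℝ)^(-c₂) := hcond
        _ ≤ C₂ * 1 := mul_le_mul_of_nonneg_left h1 hC₂.le
        _ = C₂ := mul_one _
    calc (2*(k:ℝ)*Real.log p)^7 = ((2*(k:ℝ)*Real.log p)^7 / n) * n := by field_simp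
      _ ≤ C₂ * n := mul_le_mul_of_nonneg_right h2 hn0.le
  -- per-pair tail bound
  set ee := Real.exp (-((n:ℝ) * min ((δ/(2*(k:ℝ)))^2/(128*C₁^2)) ((δ/(2*(k:ℝ)))/(4*C₁))))
    with heedef
  have hee0 : 0 ≤ ee := (Real.exp_pos _).le
  have hpair : ∀ j k' : Fin p,
      μ {ω | δ/(2*(k:ℝ)) < |(n:ℝ)⁻¹ * (∑ i, x i ω j * x i ω k') -
        ∫ ω', x ⟨0,hn⟩ ω' j * x ⟨0,hn⟩ ω' k' ∂μ|} ≤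
        ENNReal.ofReal ee + ENNReal.ofReal ee := by
    intro j k'
    have hg : Measurable (fun w : Fin p → ℝ => w j * w k') :=
      (measurable_pi_apply j).mul (measurable_pi_apply k')
    have hWmeas : ∀ i, Measurable (fun ω => x i ω j * x i ω k') := fun i =>
      ((measurable_pi_apply j).comp (hxm i)).mul ((measurable_pi_apply k').comp (hxm i))
    have hWindep : iIndepFun
        (fun i => fun ω => x i ω j * x i ω k') μ :=
      hxind.comp (fun _ => fun w => w j * w k') (fun _ => hg)
    have hWid : ∀ i, IdentDistrib (fun ω => x i ω j * x i ω k')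
        (fun ω => x ⟨0,hn⟩ ω j * x ⟨0,hn⟩ ω k') μ μ := fun i => (hxid i).comp hg
    exact aux_pair hn _ hWmeas hWindep hWid hC₁ (horl j k') hε0
  -- the union of bad events
  set Bad : Set Ω := ⋃ j : Fin p, ⋃ k' : Fin p,
      {ω | δ/(2*(k:ℝ)) < |(n:ℝ)⁻¹ * (∑ i, x i ω j * x i ω k') -
        ∫ ω', x ⟨0,hn⟩ ω' j * x ⟨0,hn⟩ ω' k' ∂μ|} with hBaddef
  have hfmeas : ∀ j k' : Fin p, Measurable (fun ω =>
      (n:ℝ)⁻¹ * (∑ i, x i ω j * x i ω k') -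
        ∫ ω', x ⟨0,hn⟩ ω' j * x ⟨0,hn⟩ ω' k' ∂μ) := by
    intro j k'
    apply Measurable.sub _ measurable_const
    apply Measurable.const_mul
    apply Finset.measurable_sum
    intro i _
    exact ((measurable_pi_apply j).comp (hxm i)).mul ((measurable_pi_apply k').comp (hxm i))
  have hBadmeas : MeasurableSet Bad := by
    refine MeasurableSet.iUnion fun j => MeasurableSet.iUnion fun k' => ?_
    exact measurableSet_lt measurable_const (hfmeas j k').abs
  have hBadle : μ Bad ≤ ENNReal.ofReal ((p:ℝ) * ((p:ℝ) * (ee + ee))) := by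
    calc μ Bad ≤ ∑' j : Fin p, μ (⋃ k' : Fin p,
        {ω | δ/(2*(k:ℝ)) < |(n:ℝ)⁻¹ * (∑ i, x i ω j * x i ω k') -
          ∫ ω', x ⟨0,hn⟩ ω' j * x ⟨0,hn⟩ ω' k' ∂μ|}) := measure_iUnion_le _
      _ ≤ ∑' j : Fin p, ∑' k' : Fin p, μ {ω | δ/(2*(k:ℝ)) <
          |(n:ℝ)⁻¹ * (∑ i, x i ω j * x i ω k') -
            ∫ ω', x ⟨0,hn⟩ ω' j * x ⟨0,hn⟩ ω' k' ∂μ|} :=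
          ENNReal.tsum_le_tsum fun j => measure_iUnion_le _
      _ ≤ ∑' _j : Fin p, ∑' _k' : Fin p, (ENNReal.ofReal ee + ENNReal.ofReal ee) :=
          ENNReal.tsum_le_tsum fun j => ENNReal.tsum_le_tsum fun k' => hpair j k'
      _ = (p:ℝ≥0∞) * ((p:ℝ≥0∞) * (ENNReal.ofReal ee + ENNReal.ofReal ee)) := by
          simp only [tsum_fintype, Finset.sum_const, Finset.card_univ, Fintype.card_fin,
            nsmul_eq_mul]
      _ = ENNReal.ofReal ((p:ℝ) * ((p:ℝ) * (ee + ee))) := by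
          rw [ENNReal.ofReal_mul hp0.le, ENNReal.ofReal_mul hp0.le,
            ENNReal.ofReal_add hee0 hee0, ENNReal.ofReal_natCast]
  -- deterministic inclusion
  have hsub : Badᶜ ⊆ {ω : Ω | ∀ v : Fin p → ℝ,
      (Finset.univ.filter fun j => v j ≠ 0).card ≤ 2 * k →
      (∑ j, v j ^ 2) ≤ 1 →
      |(n : ℝ)⁻¹ * (∑ i, (∑ j, x i ω j * v j) ^ 2) -
        ∑ j, ∑ k', v j * (∫ ω', x ⟨0, hn⟩ ω' j * x ⟨0, hn⟩ ω' k' ∂μ) * v k'| ≤ δ} := by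
    intro ω hω
    simp only [hBaddef, Set.mem_compl_iff, Set.mem_iUnion, not_exists, Set.mem_setOf_eq] at hω
    push_neg at hω
    intro v hcard hnorm
    have heq : (n : ℝ)⁻¹ * (∑ i, (∑ j, x i ω j * v j) ^ 2) -
        ∑ j, ∑ k', v j * (∫ ω', x ⟨0, hn⟩ ω' j * x ⟨0, hn⟩ ω' k' ∂μ) * v k'
        = ∑ j, ∑ k', v j * ((n:ℝ)⁻¹ * (∑ i, x i ω j * x i ω k') -
            ∫ ω', x ⟨0, hn⟩ ω' j * x ⟨0, hn⟩ ω' k' ∂μ) * v k' :=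
      aux_quad (fun i jj => x i ω jj)
        (fun jj kk => ∫ ω', x ⟨0, hn⟩ ω' jj * x ⟨0, hn⟩ ω' kk ∂μ) v
    rw [heq]
    calc |∑ j, ∑ k', v j * ((n:ℝ)⁻¹ * (∑ i, x i ω j * x i ω k') -
            ∫ ω', x ⟨0, hn⟩ ω' j * x ⟨0, hn⟩ ω' k' ∂μ) * v k'|
        ≤ δ/(2*(k:ℝ)) * ((2*k : ℕ) : ℝ) :=
          aux_sparse_bound v _ hε0.le (fun j k' => hω j k') hcard hnorm
      _ = δ := by
          push_cast
          field_simp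
  -- final assembly
  rcases le_or_gt (1 - Cval * (n:ℝ)^(-((5:ℝ)/7)) - Real.exp (-(1:ℝ) * Real.log p)) 0
    with hsign | hsign
  · rw [ENNReal.ofReal_of_nonpos hsign]
    exact zero_le
  · have hA0 : (0:ℝ) ≤ Cval * (n:ℝ)^(-((5:ℝ)/7)) + Real.exp (-(1:ℝ) * Real.log p) := by
      have := (Real.exp_pos (-(1:ℝ) * Real.log p)).le
      linarith
    have hreal : (p:ℝ) * ((p:ℝ) * (ee + ee)) ≤
        Cval * (n:ℝ)^(-((5:ℝ)/7)) + Real.exp (-(1:ℝ) * Real.log p) := by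
      rw [heedef, hCvaldef]
      exact aux_arith hδ hC₁ hC₂ hn hp2 hk1 hcond'
    have hBadle2 : μ Bad ≤ ENNReal.ofReal
        (Cval * (n:ℝ)^(-((5:ℝ)/7)) + Real.exp (-(1:ℝ) * Real.log p)) :=
      hBadle.trans (ENNReal.ofReal_le_ofReal hreal)
    calc ENNReal.ofReal (1 - Cval * (n:ℝ)^(-((5:ℝ)/7)) - Real.exp (-(1:ℝ) * Real.log p))
        ≤ 1 - μ Bad := by
          have hsum : ENNReal.ofReal (1 - Cval * (n:ℝ)^(-((5:ℝ)/7)) -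
              Real.exp (-(1:ℝ) * Real.log p)) +
              ENNReal.ofReal (Cval * (n:ℝ)^(-((5:ℝ)/7)) + Real.exp (-(1:ℝ) * Real.log p))
              = 1 := by
            rw [← ENNReal.ofReal_add hsign.le hA0, ← ENNReal.ofReal_one]
            congr 1
            ring
          have h1 : ENNReal.ofReal (1 - Cval * (n:ℝ)^(-((5:ℝ)/7)) -
              Real.exp (-(1:ℝ) * Real.log p)) ≤
              1 - ENNReal.ofReal (Cval * (n:ℝ)^(-((5:ℝ)/7)) + Real.exp (-(1:ℝ) * Real.log p)) :=
            ENNReal.le_sub_of_add_le_right ENNReal.ofReal_ne_top hsum.le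
          exact h1.trans (tsub_le_tsub_left hBadle2 1)
      _ = μ Badᶜ := (prob_compl_eq_one_sub hBadmeas).symm
      _ ≤ _ := measure_mono hsub
end

section
/- Let X and Y be independent real random variables, where X has a probability density that is symmetric about 0 and unimodal (nonincreasing on [0, ∞)). Let m ≥ 0 satisfy P(|X| ≥ m) ≥ 1/2. Then for every M ∈ ℝ, P(|X + Y − M| ≥ m) ≥ 1/2. In particular, taking m = MAD(X) and M = med(X + Y), this yields MAD(X) ≤ MAD(X + Y), where for a random variable Z, med(Z) denotes a value M with P(Z ≤ M) ≥ 1/2 and P(Z ≥ M) ≥ 1/2, and MAD(Z) := med(|Z − med(Z)|). -/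
open MeasureTheory ProbabilityTheory
open scoped ENNReal

section Stmt14AuxSection
open Set

namespace Stmt14Aux

noncomputable def W (f : ℝ → ℝ) : Measure ℝ :=
  volume.withDensity fun t => ENNReal.ofReal (f t)

lemma half_add_half : (1:ℝ≥0∞)/2 + 1/2 = 1 := by
  rw [ENNReal.div_add_div_same, one_add_one_eq_two, ENNReal.div_self] <;> norm_num

lemma le_half_of {a b : ℝ≥0∞} (hab : a + b = 1) (hb : 1/2 ≤ b) : a ≤ 1/2 := by
  by_contra h
  push_neg at h
  have : (1:ℝ≥0∞) < 1 := by
    calc (1:ℝ≥0∞) = 1/2 + 1/2 := half_add_half.symm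
    _ < a + 1/2 := ENNReal.add_lt_add_right (by norm_num) h
    _ ≤ a + b := add_le_add_right hb a
    _ = 1 := hab
  exact lt_irrefl _ this

lemma half_le_of {a b : ℝ≥0∞} (hab : a + b = 1) (ha : a ≤ 1/2) : 1/2 ≤ b := by
  by_contra h
  push_neg at h
  have : (1:ℝ≥0∞) < 1 := by
    calc (1:ℝ≥0∞) = a + b := hab.symm
    _ ≤ 1/2 + b := add_le_add_left ha b
    _ < 1/2 + 1/2 := ENNReal.add_lt_add_left (by norm_num) h
    _ = 1 := half_add_half
  exact lt_irrefl _ this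

variable {f : ℝ → ℝ}

lemma habs (heven : ∀ t, f (-t) = f t) : ∀ x, f |x| = f x := by
  intro x
  rcases abs_choice x with h | h
  · rw [h]
  · rw [h, heven]

lemma hmeas (heven : ∀ t, f (-t) = f t) (hmono : AntitoneOn f (Set.Ici 0)) :
    Measurable f := by
  have hg : Antitone (fun t : ℝ => f (max t 0)) := by
    intro a b hab
    exact hmono (mem_Ici.mpr (le_max_right a 0)) (mem_Ici.mpr (le_max_right b 0))
      (max_le_max hab le_rfl)
  have : f = fun t => (fun s : ℝ => f (max s 0)) |t| := by
    funext t
    simp only [max_eq_left (abs_nonneg t)]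
    exact (habs heven t).symm
  rw [this]
  exact hg.measurable.comp measurable_abs

lemma hWpt (f : ℝ → ℝ) (b : ℝ) : W f {b} = 0 :=
  withDensity_absolutelyContinuous _ _ (by simp)

lemma hWapply (f : ℝ → ℝ) {s : Set ℝ} (hs : MeasurableSet s) :
    W f s = ∫⁻ t in s, ENNReal.ofReal (f t) ∂volume :=
  withDensity_apply _ hs

lemma trans_Ioc (hf : Measurable f) (a b c : ℝ) :
    ∫⁻ x in Ioc a b, ENNReal.ofReal (f (x + c)) ∂volume
      = ∫⁻ x in Ioc (a+c) (b+c), ENNReal.ofReal (f x) ∂volume := by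
  have hmap : (volume : Measure ℝ).map (· + c) = volume := map_add_right_eq_self volume c
  conv_rhs => rw [← hmap]
  rw [setLIntegral_map measurableSet_Ioc (hf.ennreal_ofReal) (measurable_add_const c),
    preimage_add_const_Ioc]
  simp

lemma refl_Ioc (heven : ∀ t, f (-t) = f t) (hf : Measurable f) (a b : ℝ) :
    W f (Ioc a b) = W f (Ioc (-b) (-a)) := by
  rw [hWapply f measurableSet_Ioc, hWapply f measurableSet_Ioc]
  have hmap : (volume : Measure ℝ).map Neg.neg = volume := Measure.map_neg_eq_self volume
  conv_rhs => rw [← hmap]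
  rw [setLIntegral_map measurableSet_Ioc (hf.ennreal_ofReal) measurable_neg]
  have hpre : (Neg.neg ⁻¹' Ioc (-b) (-a) : Set ℝ) = Ico a b := by
    ext x
    simp only [mem_preimage, mem_Ioc, mem_Ico]
    constructor <;> intro h <;> constructor <;> linarith [h.1, h.2]
  rw [hpre]
  simp_rw [heven]
  exact (setLIntegral_congr Ico_ae_eq_Ioc).symm


lemma anderson_core (hf_nonneg : ∀ t, 0 ≤ f t) (heven : ∀ t, f (-t) = f t)
    (hmono : AntitoneOn f (Set.Ici 0)) {m c : ℝ} (hm0 : 0 ≤ m) (hc : 0 ≤ c) :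
    W f (Ioc (c - m) (c + m)) ≤ W f (Ioc (-m) m) := by
  have hf : Measurable f := hmeas heven hmono
  by_cases h2 : 2*m ≤ c
  · rw [hWapply f measurableSet_Ioc, hWapply f measurableSet_Ioc]
    have e1 : (-m) + c = c - m := by ring
    have e2 : m + c = c + m := by ring
    have ht := trans_Ioc hf (-m) m c
    rw [e1, e2] at ht
    rw [← ht]
    refine setLIntegral_mono' measurableSet_Ioc ?_
    intro x hx
    have hxx : |x| ≤ x + c := abs_le.mpr ⟨by linarith [hx.1, hx.2], by linarith [hx.1, hx.2]⟩
    refine ENNReal.ofReal_le_ofReal ?_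
    calc f (x + c) ≤ f |x| :=
          hmono (mem_Ici.mpr (abs_nonneg x)) (mem_Ici.mpr ((abs_nonneg x).trans hxx)) hxx
      _ = f x := habs heven x
  · push_neg at h2
    have key : W f (Ioc m (c+m)) ≤ W f (Ioc (-m) (c-m)) := by
      rw [refl_Ioc heven hf (-m) (c-m)]
      have e3 : -(c-m) = m - c := by ring
      have e4 : -(-m) = m := by ring
      rw [e3, e4]
      rw [hWapply f measurableSet_Ioc, hWapply f measurableSet_Ioc]
      have ht := trans_Ioc hf (m - c) m c
      have e5 : m - c + c = m := by ring
      have e6 : m + c = c + m := by ring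
      rw [e5, e6] at ht
      rw [← ht]
      refine setLIntegral_mono' measurableSet_Ioc ?_
      intro x hx
      have hxx : |x| ≤ x + c := abs_le.mpr ⟨by linarith [hx.1, hx.2], by linarith [hx.1, hx.2]⟩
      refine ENNReal.ofReal_le_ofReal ?_
      calc f (x + c) ≤ f |x| :=
            hmono (mem_Ici.mpr (abs_nonneg x)) (mem_Ici.mpr ((abs_nonneg x).trans hxx)) hxx
        _ = f x := habs heven x
    have hsplit1 : W f (Ioc (c-m) (c+m)) = W f (Ioc (c-m) m) + W f (Ioc m (c+m)) := by
      rw [← Ioc_union_Ioc_eq_Ioc (by linarith : c - m ≤ m) (by linarith : m ≤ c + m),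
        measure_union (Ioc_disjoint_Ioc_of_le le_rfl) measurableSet_Ioc]
    have hsplit2 : W f (Ioc (-m) m) = W f (Ioc (-m) (c-m)) + W f (Ioc (c-m) m) := by
      rw [← Ioc_union_Ioc_eq_Ioc (by linarith : -m ≤ c - m) (by linarith : c - m ≤ m),
        measure_union (Ioc_disjoint_Ioc_of_le le_rfl) measurableSet_Ioc]
    rw [hsplit1, hsplit2]
    calc W f (Ioc (c-m) m) + W f (Ioc m (c+m)) ≤ W f (Ioc (c-m) m) + W f (Ioc (-m) (c-m)) :=
          add_le_add_right key _
      _ = W f (Ioc (-m) (c-m)) + W f (Ioc (c-m) m) := add_comm _ _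

lemma anderson_Ioc (hf_nonneg : ∀ t, 0 ≤ f t) (heven : ∀ t, f (-t) = f t)
    (hmono : AntitoneOn f (Set.Ici 0)) {m : ℝ} (hm0 : 0 ≤ m) (c : ℝ) :
    W f (Ioc (c - m) (c + m)) ≤ W f (Ioc (-m) m) := by
  have hf : Measurable f := hmeas heven hmono
  rcases le_or_gt 0 c with h | h
  · exact anderson_core hf_nonneg heven hmono hm0 h
  · rw [refl_Ioc heven hf (c - m) (c + m)]
    have e1 : -(c+m) = (-c) - m := by ring
    have e2 : -(c-m) = (-c) + m := by ring
    rw [e1, e2]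
    exact anderson_core hf_nonneg heven hmono hm0 (by linarith)

lemma anderson_le (hf_nonneg : ∀ t, 0 ≤ f t) (heven : ∀ t, f (-t) = f t)
    (hmono : AntitoneOn f (Set.Ici 0)) {r : ℝ} (hr : 0 ≤ r) (c : ℝ) :
    W f {x | |x + c| ≤ r} ≤ W f {x | |x| ≤ r} := by
  have h1 : {x : ℝ | |x + c| ≤ r} = Icc (-c - r) (-c + r) := by
    ext x
    simp only [mem_setOf_eq, mem_Icc, abs_le]
    constructor <;> intro h <;> constructor <;> linarith [h.1, h.2]
  have h2 : {x : ℝ | |x| ≤ r} = Icc (-r) r := by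
    ext x; simp [abs_le]
  rw [h1, h2, ← measure_congr (Ioc_ae_eq_Icc' (μ := W f) (hWpt f _)),
    ← measure_congr (Ioc_ae_eq_Icc' (μ := W f) (hWpt f _))]
  have e1 : -c - r = (-c) - r := by ring
  have e2 : -c + r = (-c) + r := by ring
  have e3 : (-r : ℝ) = -r := rfl
  rw [e1, e2]
  exact anderson_Ioc hf_nonneg heven hmono hr (-c)

lemma anderson_lt (hf_nonneg : ∀ t, 0 ≤ f t) (heven : ∀ t, f (-t) = f t)
    (hmono : AntitoneOn f (Set.Ici 0)) {r : ℝ} (hr : 0 ≤ r) (c : ℝ) :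
    W f {x | |x + c| < r} ≤ W f {x | |x| < r} := by
  have h1 : {x : ℝ | |x + c| < r} = Ioo (-c - r) (-c + r) := by
    ext x
    simp only [mem_setOf_eq, mem_Ioo, abs_lt]
    constructor <;> intro h <;> constructor <;> linarith [h.1, h.2]
  have h2 : {x : ℝ | |x| < r} = Ioo (-r) r := by
    ext x; simp [abs_lt]
  rw [h1, h2, measure_congr (Ioo_ae_eq_Ioc' (μ := W f) (hWpt f _)),
    measure_congr (Ioo_ae_eq_Ioc' (μ := W f) (hWpt f _))]
  have e1 : -c - r = (-c) - r := by ring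
  have e2 : -c + r = (-c) + r := by ring
  rw [e1, e2]
  exact anderson_Ioc hf_nonneg heven hmono hr (-c)


lemma joint_bound {Ω : Type*} [MeasurableSpace Ω] (μ : Measure Ω) [IsProbabilityMeasure μ]
    {X Y : Ω → ℝ} (hX : Measurable X) (hY : Measurable Y)
    (hmap : μ.map (fun ω => (X ω, Y ω)) = (μ.map X).prod (μ.map Y))
    (hpdf : μ.map X = W f)
    {K : Set ℝ} (hK : MeasurableSet K) (M : ℝ) {q : ℝ≥0∞}
    (hslice : ∀ c : ℝ, W f {x | x + c ∈ K} ≤ q) :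
    μ {ω | X ω + Y ω - M ∈ K} ≤ q := by
  haveI : IsProbabilityMeasure (μ.map Y) := Measure.isProbabilityMeasure_map hY.aemeasurable
  have hXY : Measurable fun ω => (X ω, Y ω) := hX.prodMk hY
  have hS : MeasurableSet {p : ℝ × ℝ | p.1 + p.2 - M ∈ K} :=
    ((measurable_fst.add measurable_snd).sub_const M) hK
  have hE : {ω | X ω + Y ω - M ∈ K} = (fun ω => (X ω, Y ω)) ⁻¹' {p : ℝ × ℝ | p.1 + p.2 - M ∈ K} :=
    rfl
  rw [hE, ← Measure.map_apply hXY hS, hmap, Measure.prod_apply_symm hS]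
  calc ∫⁻ y, (μ.map X) ((fun x => (x, y)) ⁻¹' {p : ℝ × ℝ | p.1 + p.2 - M ∈ K}) ∂(μ.map Y)
      ≤ ∫⁻ _, q ∂(μ.map Y) := by
        refine lintegral_mono fun y => ?_
        have hpre : ((fun x => (x, y)) ⁻¹' {p : ℝ × ℝ | p.1 + p.2 - M ∈ K})
            = {x | x + (y - M) ∈ K} := by
          ext x; simp only [mem_preimage, mem_setOf_eq, add_sub_assoc]
        rw [hpre, hpdf]; exact hslice (y - M)
    _ = q := by simp

end Stmt14Aux

end Stmt14AuxSection

/-- Let `X` and `Y` be independent, `X` having a density that is symmetric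
about `0` and nonincreasing on `[0,∞)`, and let `m ≥ 0` satisfy `P(|X| ≥ m) ≥ 1/2`. Then for
every `M ∈ ℝ`, `P(|X + Y − M| ≥ m) ≥ 1/2`. In particular, taking `m = MAD(X)` (a median of
`|X|`) and `M = med(X+Y)`, this yields `MAD(X) ≤ MAD(X+Y)`, where a median of `Z` is any `M`
with `P(Z ≤ M) ≥ 1/2` and `P(Z ≥ M) ≥ 1/2`, and `MAD(Z)` is a median of `|Z − med(Z)|`. -/
theorem stmt14 {Ω : Type*} [MeasurableSpace Ω] (μ : Measure Ω) [IsProbabilityMeasure μ]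
    (X Y : Ω → ℝ) (hX : Measurable X) (hY : Measurable Y) (hindep : IndepFun X Y μ)
    (f : ℝ → ℝ) (hf_nonneg : ∀ t, 0 ≤ f t)
    (hpdf : μ.map X = MeasureTheory.volume.withDensity fun t => ENNReal.ofReal (f t))
    (heven : ∀ t, f (-t) = f t) (hmono : AntitoneOn f (Set.Ici 0))
    (m : ℝ) (hm0 : 0 ≤ m) (hm : (1 : ℝ≥0∞) / 2 ≤ μ {ω | m ≤ |X ω|}) :
    (∀ M : ℝ, (1 : ℝ≥0∞) / 2 ≤ μ {ω | m ≤ |X ω + Y ω - M|}) ∧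
    -- taking `m` to be a median of `|X|` (no other property of `m` is used above),
    -- any median `MXY` of `X + Y` and any median `mXY` of `|X + Y − MXY|` satisfy `m ≤ mXY`
    (((1 : ℝ≥0∞) / 2 ≤ μ {ω | |X ω| ≤ m}) →
      ∀ MXY mXY : ℝ,
        ((1 : ℝ≥0∞) / 2 ≤ μ {ω | X ω + Y ω ≤ MXY} ∧
          (1 : ℝ≥0∞) / 2 ≤ μ {ω | MXY ≤ X ω + Y ω}) →
        ((1 : ℝ≥0∞) / 2 ≤ μ {ω | |X ω + Y ω - MXY| ≤ mXY} ∧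
          (1 : ℝ≥0∞) / 2 ≤ μ {ω | mXY ≤ |X ω + Y ω - MXY|}) →
        m ≤ mXY) := by
  have hpdf' : μ.map X = Stmt14Aux.W f := hpdf
  have hf : Measurable f := Stmt14Aux.hmeas heven hmono
  have hmap : μ.map (fun ω => (X ω, Y ω)) = (μ.map X).prod (μ.map Y) :=
    (indepFun_iff_map_prod_eq_prod_map_map hX.aemeasurable hY.aemeasurable).mp hindep
  have hXabs : Measurable fun ω => |X ω| := hX.abs
  have part1 : ∀ M : ℝ, (1:ℝ≥0∞)/2 ≤ μ {ω | m ≤ |X ω + Y ω - M|} := by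
    intro M
    have hK : MeasurableSet {z : ℝ | |z| < m} := measurable_abs measurableSet_Iio
    have hhalf : Stmt14Aux.W f {x : ℝ | |x| < m} ≤ 1/2 := by
      have htrans : Stmt14Aux.W f {x : ℝ | |x| < m} = μ {ω | |X ω| < m} := by
        rw [← hpdf', Measure.map_apply hX hK]
        rfl
      rw [htrans]
      refine Stmt14Aux.le_half_of (prob_add_prob_compl (μ := μ)
        (hXabs measurableSet_Iio)) ?_
      have hc : {ω | |X ω| < m}ᶜ = {ω | m ≤ |X ω|} := by ext ω; simp [not_lt]
      rw [hc]; exact hm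
    have hb := Stmt14Aux.joint_bound μ hX hY hmap hpdf' hK M (q := 1/2)
      (fun c => le_trans
        (Stmt14Aux.anderson_lt hf_nonneg heven hmono hm0 c) hhalf)
    have hmeasE : MeasurableSet {ω | |X ω + Y ω - M| < m} :=
      (((hX.add hY).sub_const M).abs) measurableSet_Iio
    have hc : {ω | |X ω + Y ω - M| < m}ᶜ = {ω | m ≤ |X ω + Y ω - M|} := by
      ext ω; simp [not_lt]
    have hres := Stmt14Aux.half_le_of (prob_add_prob_compl hmeasE) hb
    rwa [hc] at hres
  refine ⟨part1, ?_⟩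
  intro hXle MXY mXY hMed hMAD
  by_contra hcon
  push_neg at hcon
  have hm1 := hMAD.1
  have hmXY0 : 0 ≤ mXY := by
    by_contra hneg
    push_neg at hneg
    have hempty : {ω | |X ω + Y ω - MXY| ≤ mXY} = ∅ := by
      ext ω
      simp only [Set.mem_setOf_eq, Set.mem_empty_iff_false, iff_false, not_le]
      exact lt_of_lt_of_le hneg (abs_nonneg _)
    rw [hempty, measure_empty] at hm1
    simp [ENNReal.div_eq_zero_iff] at hm1
  have hKle : MeasurableSet {z : ℝ | |z| ≤ mXY} := measurable_abs measurableSet_Iic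
  have hq : (1:ℝ≥0∞)/2 ≤ Stmt14Aux.W f {x : ℝ | |x| ≤ mXY} :=
    le_trans hm1 (Stmt14Aux.joint_bound μ hX hY hmap hpdf' hKle MXY
      (fun c => Stmt14Aux.anderson_le hf_nonneg heven hmono hmXY0 c))
  have hKge : MeasurableSet {x : ℝ | m ≤ |x|} := measurable_abs measurableSet_Ici
  have hbW : (1:ℝ≥0∞)/2 ≤ Stmt14Aux.W f {x : ℝ | m ≤ |x|} := by
    rw [← hpdf', Measure.map_apply hX hKge]
    exact hm
  haveI : IsProbabilityMeasure (Stmt14Aux.W f) := by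
    rw [← hpdf']; exact Measure.isProbabilityMeasure_map hX.aemeasurable
  have hdisj : Disjoint {x : ℝ | |x| ≤ mXY} {x : ℝ | m ≤ |x|} := by
    rw [Set.disjoint_left]
    intro x hxA hxB
    simp only [Set.mem_setOf_eq] at hxA hxB
    linarith
  have hU : MeasurableSet ({x : ℝ | |x| ≤ mXY} ∪ {x : ℝ | m ≤ |x|}) := hKle.union hKge
  have hW1 : (1:ℝ≥0∞) ≤ Stmt14Aux.W f ({x : ℝ | |x| ≤ mXY} ∪ {x : ℝ | m ≤ |x|}) := by
    rw [measure_union hdisj hKge]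
    calc (1:ℝ≥0∞) = 1/2 + 1/2 := Stmt14Aux.half_add_half.symm
      _ ≤ _ := add_le_add hq hbW
  have hcompl0 : Stmt14Aux.W f ({x : ℝ | |x| ≤ mXY} ∪ {x : ℝ | m ≤ |x|})ᶜ = 0 := by
    rw [measure_compl hU (measure_ne_top _ _), measure_univ]
    exact tsub_eq_zero_of_le hW1
  have hIoo0 : Stmt14Aux.W f (Set.Ioo mXY m) = 0 := by
    refine measure_mono_null ?_ hcompl0
    intro x hx
    simp only [Set.mem_compl_iff, Set.mem_union, Set.mem_setOf_eq, not_or, not_le]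
    have hx0 : 0 ≤ x := le_trans hmXY0 hx.1.le
    rw [abs_of_nonneg hx0]
    exact ⟨hx.1, hx.2⟩
  have hf0 : ∀ t ∈ Set.Ioo mXY m, f t = 0 := by
    intro t ht
    have h1 : Stmt14Aux.W f (Set.Ioo mXY t) = 0 :=
      measure_mono_null (Set.Ioo_subset_Ioo le_rfl ht.2.le) hIoo0
    rw [Stmt14Aux.hWapply f measurableSet_Ioo] at h1
    have h2 : ENNReal.ofReal (f t) * volume (Set.Ioo mXY t)
        ≤ ∫⁻ x in Set.Ioo mXY t, ENNReal.ofReal (f x) ∂volume := by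
      rw [← setLIntegral_const]
      refine setLIntegral_mono' measurableSet_Ioo ?_
      intro x hx
      exact ENNReal.ofReal_le_ofReal
        (hmono (Set.mem_Ici.mpr (hmXY0.trans hx.1.le)) (Set.mem_Ici.mpr (hmXY0.trans ht.1.le))
          hx.2.le)
    rw [h1] at h2
    have h3 : ENNReal.ofReal (f t) * volume (Set.Ioo mXY t) = 0 := le_antisymm h2 zero_le
    have hv : volume (Set.Ioo mXY t) ≠ 0 := by
      rw [Real.volume_Ioo]
      simp only [ne_eq, ENNReal.ofReal_eq_zero, not_le]
      linarith [ht.1]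
    have h4 := (mul_eq_zero.mp h3).resolve_right hv
    exact le_antisymm (ENNReal.ofReal_eq_zero.mp h4) (hf_nonneg t)
  have hzero : Stmt14Aux.W f {x : ℝ | m ≤ |x|} = 0 := by
    rw [Stmt14Aux.hWapply f hKge]
    have hpt : ∀ x ∈ {x : ℝ | m ≤ |x|}, ENNReal.ofReal (f x) = (fun _ => (0:ℝ≥0∞)) x := by
      intro x hxB
      simp only [Set.mem_setOf_eq] at hxB
      have ht0mem : (mXY + m)/2 ∈ Set.Ioo mXY m := ⟨by linarith, by linarith⟩
      have h1 : f |x| ≤ f ((mXY + m)/2) :=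
        hmono (Set.mem_Ici.mpr (by linarith : (0:ℝ) ≤ (mXY + m)/2))
          (Set.mem_Ici.mpr (abs_nonneg x))
          (le_trans (by linarith [ht0mem.2]) hxB)
      rw [hf0 _ ht0mem] at h1
      have hfx : f x = 0 := le_antisymm (by rwa [← Stmt14Aux.habs heven x]) (hf_nonneg x)
      simp [hfx]
    rw [setLIntegral_congr_fun hKge hpt]
    simp
  rw [hzero] at hbW
  simp [ENNReal.div_eq_zero_iff] at hbW
end

section
/- Let X be a real random variable with a probability density f that is even (f(−t) = f(t)) and nonincreasing on [0, ∞). Let m ≥ 0 satisfy P(|X| ≥ m) ≥ 1/2. Then for every a ∈ ℝ, P(|X − a| ≥ m) ≥ 1/2. -/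
open MeasureTheory
open scoped ENNReal

section Aux

variable {f : ℝ → ℝ}

private lemma habs_aux (heven : ∀ t, f (-t) = f t) : ∀ t, f |t| = f t := by
  intro t
  rcases abs_cases t with ⟨h, _⟩ | ⟨h, _⟩
  · rw [h]
  · rw [h, heven]

private lemma hcomp_aux (heven : ∀ t, f (-t) = f t) (hmono : AntitoneOn f (Set.Ici 0)) :
    ∀ s t : ℝ, |s| ≤ |t| → f t ≤ f s := by
  intro s t h
  rw [← habs_aux heven s, ← habs_aux heven t]
  exact hmono (abs_nonneg s) (abs_nonneg t) h

private lemma hmeas_aux (heven : ∀ t, f (-t) = f t) (hmono : AntitoneOn f (Set.Ici 0)) :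
    Measurable f := by
  apply measurable_of_Ioi
  intro c
  have hT : MeasurableSet {t : ℝ | 0 ≤ t ∧ c < f t} := by
    refine Set.OrdConnected.measurableSet ⟨?_⟩
    rintro x ⟨hx0, hxf⟩ y ⟨hy0, hyf⟩ z ⟨hz1, hz2⟩
    refine ⟨le_trans hx0 hz1, lt_of_lt_of_le hyf (hmono ?_ hy0 hz2)⟩
    exact le_trans hx0 hz1
  have : f ⁻¹' Set.Ioi c = abs ⁻¹' {t : ℝ | 0 ≤ t ∧ c < f t} := by
    ext x
    simp only [Set.mem_preimage, Set.mem_Ioi, Set.mem_setOf_eq, abs_nonneg, true_and,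
      habs_aux heven x]
  rw [this]
  exact measurable_abs hT

/-- Key inequality for `a ≥ 0`. -/
private lemma key_aux (hf_nonneg : ∀ t, 0 ≤ f t) (heven : ∀ t, f (-t) = f t)
    (hmono : AntitoneOn f (Set.Ici 0)) {m : ℝ} (hm0 : 0 ≤ m) {a : ℝ} (ha : 0 ≤ a) :
    ∫⁻ t in Set.Ioo (a - m) (a + m), ENNReal.ofReal (f t) ≤
      ∫⁻ t in Set.Ioo (-m) m, ENNReal.ofReal (f t) := by
  have hmeas : Measurable f := hmeas_aux heven hmono
  have hcomp := hcomp_aux heven hmono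
  rcases le_or_gt (2 * m) a with h2 | h2
  · -- far case: translate by `a`
    have htr := (measurePreserving_add_right volume a).setLIntegral_comp_preimage_emb
      (MeasurableEquiv.addRight a).measurableEmbedding
      (fun t => ENNReal.ofReal (f t)) (Set.Ioo (a - m) (a + m))
    have hpre : (fun x : ℝ => x + a) ⁻¹' Set.Ioo (a - m) (a + m) = Set.Ioo (-m) m := by
      ext x
      simp only [Set.mem_preimage, Set.mem_Ioo]
      constructor <;> rintro ⟨h1, h3⟩ <;> constructor <;> linarith
    rw [← htr, hpre]
    refine setLIntegral_mono (hmeas.ennreal_ofReal) ?_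
    intro x hx
    refine ENNReal.ofReal_le_ofReal (hcomp x (x + a) ?_)
    have hx1 : -m < x := hx.1
    have hx2 : x < m := hx.2
    have h3 : |x| ≤ m := le_of_lt (abs_lt.mpr ⟨hx1, hx2⟩)
    have h4 : m ≤ x + a := by linarith
    calc |x| ≤ m := h3
      _ ≤ x + a := h4
      _ ≤ |x + a| := le_abs_self _
  · rcases eq_or_lt_of_le ha with ha0 | ha0
    · rw [← ha0]
      simp
    -- near case: 0 < a < 2m
    have split1 : Set.Ioo (a - m) m ∪ Set.Ico m (a + m) = Set.Ioo (a - m) (a + m) :=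
      Set.Ioo_union_Ico_eq_Ioo (by linarith) (by linarith)
    have split2 : Set.Ioc (-m) (a - m) ∪ Set.Ioo (a - m) m = Set.Ioo (-m) m :=
      Set.Ioc_union_Ioo_eq_Ioo (by linarith) (by linarith)
    rw [← split1, ← split2]
    rw [lintegral_union measurableSet_Ico
      (Set.disjoint_left.mpr fun x hx hx' => hx.2.not_ge hx'.1)]
    rw [lintegral_union measurableSet_Ioo
      (Set.disjoint_left.mpr fun x hx hx' => hx.2.not_gt hx'.1)]
    rw [add_comm (∫⁻ t in Set.Ioc (-m) (a - m), ENNReal.ofReal (f t))]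
    refine add_le_add le_rfl ?_
    -- remains: ∫ over Ico m (a+m) ≤ ∫ over Ioc (-m) (a-m)
    have htr := (measurePreserving_add_right volume (2 * m)).setLIntegral_comp_preimage_emb
      (MeasurableEquiv.addRight (2 * m)).measurableEmbedding
      (fun t => ENNReal.ofReal (f t)) (Set.Ico m (a + m))
    have hpre : (fun x : ℝ => x + 2 * m) ⁻¹' Set.Ico m (a + m) = Set.Ico (-m) (a - m) := by
      ext x
      simp only [Set.mem_preimage, Set.mem_Ico]
      constructor <;> rintro ⟨h1, h3⟩ <;> constructor <;> linarith
    rw [← htr, hpre]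
    have step : ∫⁻ t in Set.Ico (-m) (a - m), ENNReal.ofReal (f (t + 2 * m)) ≤
        ∫⁻ t in Set.Ico (-m) (a - m), ENNReal.ofReal (f t) := by
      refine setLIntegral_mono (hmeas.ennreal_ofReal) ?_
      intro x hx
      refine ENNReal.ofReal_le_ofReal (hcomp x (x + 2 * m) ?_)
      have hx1 : -m ≤ x := hx.1
      have hx2 : x < a - m := hx.2
      have h4 : |x| ≤ x + 2 * m := by
        rcases abs_cases x with ⟨h, _⟩ | ⟨h, _⟩ <;> rw [h] <;> linarith
      calc |x| ≤ x + 2 * m := h4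
        _ ≤ |x + 2 * m| := le_abs_self _
    refine le_trans step (le_of_eq ?_)
    refine setLIntegral_congr ?_
    exact (Ico_ae_eq_Icc (α := ℝ)).trans (Ioc_ae_eq_Icc (α := ℝ)).symm

/-- Key inequality for all `a`. -/
private lemma key_aux' (hf_nonneg : ∀ t, 0 ≤ f t) (heven : ∀ t, f (-t) = f t)
    (hmono : AntitoneOn f (Set.Ici 0)) {m : ℝ} (hm0 : 0 ≤ m) (a : ℝ) :
    ∫⁻ t in Set.Ioo (a - m) (a + m), ENNReal.ofReal (f t) ≤
      ∫⁻ t in Set.Ioo (-m) m, ENNReal.ofReal (f t) := by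
  rcases le_or_gt 0 a with ha | ha
  · exact key_aux hf_nonneg heven hmono hm0 ha
  · have hneg := (Measure.measurePreserving_neg volume).setLIntegral_comp_preimage_emb
      measurableEmbedding_neg (fun t => ENNReal.ofReal (f t)) (Set.Ioo (-a - m) (-a + m))
    have hpre : (fun x : ℝ => -x) ⁻¹' Set.Ioo (-a - m) (-a + m) = Set.Ioo (a - m) (a + m) := by
      ext x
      simp only [Set.mem_preimage, Set.mem_Ioo]
      constructor <;> rintro ⟨h1, h3⟩ <;> constructor <;> linarith
    have heq : ∫⁻ t in Set.Ioo (a - m) (a + m), ENNReal.ofReal (f t) =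
        ∫⁻ t in Set.Ioo (-a - m) (-a + m), ENNReal.ofReal (f t) := by
      rw [← hneg, hpre]
      congr 1
      ext x
      rw [heven]
    rw [heq]
    exact key_aux hf_nonneg heven hmono hm0 (by linarith : (0:ℝ) ≤ -a)

end Aux

/-- If `X` has an even density `f` that is nonincreasing on `[0,∞)`, and
`m ≥ 0` satisfies `P(|X| ≥ m) ≥ 1/2`, then for every `a ∈ ℝ`, `P(|X − a| ≥ m) ≥ 1/2`. -/
theorem stmt15 {Ω : Type*} [MeasurableSpace Ω] (μ : Measure Ω) [IsProbabilityMeasure μ]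
    (X : Ω → ℝ) (hX : Measurable X) (f : ℝ → ℝ) (hf_nonneg : ∀ t, 0 ≤ f t)
    (hpdf : μ.map X = MeasureTheory.volume.withDensity fun t => ENNReal.ofReal (f t))
    (heven : ∀ t, f (-t) = f t) (hmono : AntitoneOn f (Set.Ici 0))
    (m : ℝ) (hm0 : 0 ≤ m) (hm : (1 : ℝ≥0∞) / 2 ≤ μ {ω | m ≤ |X ω|}) (a : ℝ) :
    (1 : ℝ≥0∞) / 2 ≤ μ {ω | m ≤ |X ω - a|} := by
  set A : Set Ω := {ω | m ≤ |X ω - a|} with hA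
  set B : Set Ω := {ω | m ≤ |X ω|} with hB
  have hXa : Measurable fun ω => |X ω - a| := (hX.sub measurable_const).abs
  have hAmeas : MeasurableSet A := measurableSet_le measurable_const hXa
  have hBmeas : MeasurableSet B := measurableSet_le measurable_const hX.abs
  have hAc : Aᶜ = X ⁻¹' Set.Ioo (a - m) (a + m) := by
    ext ω
    simp only [hA, Set.mem_compl_iff, Set.mem_setOf_eq, not_le, Set.mem_preimage, Set.mem_Ioo,
      abs_lt]
    constructor <;> rintro ⟨h1, h3⟩ <;> constructor <;> linarith
  have hBc : Bᶜ = X ⁻¹' Set.Ioo (-m) m := by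
    ext ω
    simp only [hB, Set.mem_compl_iff, Set.mem_setOf_eq, not_le, Set.mem_preimage, Set.mem_Ioo,
      abs_lt]
  have h1 : μ Aᶜ = ∫⁻ t in Set.Ioo (a - m) (a + m), ENNReal.ofReal (f t) := by
    rw [hAc, ← Measure.map_apply hX measurableSet_Ioo, hpdf,
      withDensity_apply _ measurableSet_Ioo]
  have h2 : μ Bᶜ = ∫⁻ t in Set.Ioo (-m) m, ENNReal.ofReal (f t) := by
    rw [hBc, ← Measure.map_apply hX measurableSet_Ioo, hpdf,
      withDensity_apply _ measurableSet_Ioo]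
  have hAB : μ Aᶜ ≤ μ Bᶜ := by
    rw [h1, h2]
    exact key_aux' hf_nonneg heven hmono hm0 a
  have hBc_le : μ Bᶜ ≤ 1 / 2 := by
    rw [prob_compl_eq_one_sub hBmeas]
    calc 1 - μ B ≤ 1 - 1 / 2 := tsub_le_tsub_left hm 1
      _ = 1 / 2 := ENNReal.sub_half ENNReal.one_ne_top
  have hAc_le : μ Aᶜ ≤ 1 / 2 := le_trans hAB hBc_le
  have : μ A = 1 - μ Aᶜ := by
    rw [← prob_compl_eq_one_sub hAmeas.compl, compl_compl]
  rw [this]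
  calc (1 : ℝ≥0∞) / 2 = 1 - 1 / 2 := (ENNReal.sub_half ENNReal.one_ne_top).symm
    _ ≤ 1 - μ Aᶜ := tsub_le_tsub_left hAc_le 1
end

section
/- Let L : ℝ^p → ℝ be a convex differentiable function, let β* ∈ ℝ^p have support S with |S| ≤ k, and let λ̄ > 0. Suppose β̂ satisfies the basic inequality L(β̂) + λ̄‖β̂‖₁ ≤ L(β*) + λ̄‖β*‖₁, that ‖∇L(β*)‖_∞ ≤ λ̄/2, and that the restricted strong convexity bound L(β̂) − L(β*) − ⟨∇L(β*), β̂ − β*⟩ ≥ α ‖β̂ − β*‖₂² holds for some α > 0. Then ‖β̂ − β*‖₂ ≤ 3λ̄√k/(2α). -/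
open scoped BigOperators

/-- Deterministic core of the estimation-error bound: if the basic
inequality, the gradient bound `‖∇L(β*)‖_∞ ≤ λ̄/2`, and the restricted strong convexity
bound hold, then `‖β̂ − β*‖₂ ≤ 3λ̄√k/(2α)`. -/
theorem stmt17 {p : ℕ} (L : EuclideanSpace ℝ (Fin p) → ℝ)
    (hconv : ConvexOn ℝ Set.univ L)
    (L' : EuclideanSpace ℝ (Fin p) → EuclideanSpace ℝ (Fin p))
    (hgrad : ∀ β, HasGradientAt L (L' β) β)
    (βstar βhat : EuclideanSpace ℝ (Fin p)) (S : Finset (Fin p)) (k : ℕ)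
    (hsupp : ∀ j ∉ S, βstar j = 0) (hcard : S.card ≤ k)
    (lam : ℝ) (hlam : 0 < lam)
    (hbasic : L βhat + lam * ∑ j, |βhat j| ≤ L βstar + lam * ∑ j, |βstar j|)
    (hgradbound : ∀ j, |L' βstar j| ≤ lam / 2)
    (α : ℝ) (hα : 0 < α)
    (hRSC : α * ‖βhat - βstar‖ ^ 2 ≤
      L βhat - L βstar - (inner ℝ (L' βstar) (βhat - βstar) : ℝ)) :
    ‖βhat - βstar‖ ≤ 3 * lam * Real.sqrt k / (2 * α) := by
  set ν := βhat - βstar with hν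
  have hνj : ∀ j, ν j = βhat j - βstar j := fun j => rfl
  set A := ∑ j ∈ S, |ν j| with hA
  set B := ∑ j ∈ Sᶜ, |ν j| with hB
  have hA0 : 0 ≤ A := Finset.sum_nonneg fun j _ => abs_nonneg _
  have hB0 : 0 ≤ B := Finset.sum_nonneg fun j _ => abs_nonneg _
  -- Step 2: ∑|β*| − ∑|β̂| ≤ A − B
  have hstep2 : (∑ j, |βstar j|) - (∑ j, |βhat j|) ≤ A - B := by
    have h1 : ∀ t : EuclideanSpace ℝ (Fin p), (∑ j, |t j|) = (∑ j ∈ S, |t j|) + ∑ j ∈ Sᶜ, |t j| := by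
      intro t; rw [Finset.sum_add_sum_compl]
    rw [h1, h1]
    have hS : (∑ j ∈ S, |βstar j|) - (∑ j ∈ S, |βhat j|) ≤ A := by
      rw [hA, ← Finset.sum_sub_distrib]
      refine Finset.sum_le_sum fun j _ => ?_
      have := abs_sub_abs_le_abs_sub (βstar j) (βhat j)
      rw [hνj j, abs_sub_comm]; linarith
    have hSc : (∑ j ∈ Sᶜ, |βstar j|) - (∑ j ∈ Sᶜ, |βhat j|) = -B := by
      have : (∑ j ∈ Sᶜ, |βstar j|) = 0 := by
        refine Finset.sum_eq_zero fun j hj => ?_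
        rw [hsupp j (Finset.mem_compl.mp hj), abs_zero]
      rw [this, hB, zero_sub, neg_inj]
      refine Finset.sum_congr rfl fun j hj => ?_
      rw [hνj j, hsupp j (Finset.mem_compl.mp hj), sub_zero]
    linarith
  -- Step 3: inner bound
  have hinner : |(inner ℝ (L' βstar) ν : ℝ)| ≤ lam / 2 * (A + B) := by
    rw [PiLp.inner_apply]
    simp only [RCLike.inner_apply', starRingEnd_apply, star_trivial]
    calc |∑ j, L' βstar j * ν j| ≤ ∑ j, |L' βstar j * ν j| := Finset.abs_sum_le_sum_abs _ _
      _ ≤ ∑ j, lam / 2 * |ν j| := by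
          refine Finset.sum_le_sum fun j _ => ?_
          rw [abs_mul]
          exact mul_le_mul_of_nonneg_right (hgradbound j) (abs_nonneg _)
      _ = lam / 2 * (A + B) := by
          rw [← Finset.mul_sum, hA, hB, Finset.sum_add_sum_compl]
  -- main chain
  have hmain : α * ‖ν‖ ^ 2 ≤ 3 * lam / 2 * A := by
    have h1 : L βhat - L βstar ≤ lam * ((∑ j, |βstar j|) - ∑ j, |βhat j|) := by ring_nf; linarith
    have h2 : lam * ((∑ j, |βstar j|) - ∑ j, |βhat j|) ≤ lam * (A - B) :=
      mul_le_mul_of_nonneg_left hstep2 hlam.le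
    have h3 : -(inner ℝ (L' βstar) ν : ℝ) ≤ lam / 2 * (A + B) := by
      have := neg_abs_le (inner ℝ (L' βstar) ν : ℝ); linarith
    calc α * ‖ν‖ ^ 2 ≤ L βhat - L βstar - (inner ℝ (L' βstar) ν : ℝ) := hRSC
      _ ≤ lam * (A - B) + lam / 2 * (A + B) := by linarith
      _ ≤ 3 * lam / 2 * A := by nlinarith
  -- Step 4: A ≤ √k * ‖ν‖
  have hAle : A ≤ Real.sqrt k * ‖ν‖ := by
    have hsq : A ^ 2 ≤ (k : ℝ) * ‖ν‖ ^ 2 := by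
      have hc : A ^ 2 ≤ (S.card : ℝ) * ∑ j ∈ S, |ν j| ^ 2 := by
        exact_mod_cast sq_sum_le_card_mul_sum_sq (s := S) (f := fun j => |ν j|)
      have hsum : (∑ j ∈ S, |ν j| ^ 2) ≤ ‖ν‖ ^ 2 := by
        rw [EuclideanSpace.norm_eq, Real.sq_sqrt (Finset.sum_nonneg fun j _ => sq_nonneg _)]
        have h := Finset.sum_le_sum_of_subset_of_nonneg (Finset.subset_univ S)
          (fun (j : Fin p) _ _ => sq_nonneg (|ν j|))
        simpa [Real.norm_eq_abs] using h
      calc A ^ 2 ≤ (S.card : ℝ) * ∑ j ∈ S, |ν j| ^ 2 := hc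
        _ ≤ (k : ℝ) * ‖ν‖ ^ 2 := by
            have hk : (S.card : ℝ) ≤ k := by exact_mod_cast hcard
            have h0 : (0:ℝ) ≤ ∑ j ∈ S, |ν j| ^ 2 := Finset.sum_nonneg fun j _ => sq_nonneg _
            nlinarith [norm_nonneg ν]
    calc A = Real.sqrt (A ^ 2) := (Real.sqrt_sq hA0).symm
      _ ≤ Real.sqrt ((k : ℝ) * ‖ν‖ ^ 2) := Real.sqrt_le_sqrt hsq
      _ = Real.sqrt k * ‖ν‖ := by
          rw [Real.sqrt_mul (Nat.cast_nonneg k), Real.sqrt_sq (norm_nonneg ν)]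
  -- conclude
  have hn : 0 ≤ ‖ν‖ := norm_nonneg ν
  rcases eq_or_lt_of_le hn with h | h
  · rw [← h]; positivity
  · rw [le_div_iff₀ (by positivity)]
    have hfinal : α * ‖ν‖ ^ 2 ≤ 3 * lam / 2 * (Real.sqrt k * ‖ν‖) :=
      hmain.trans (by nlinarith [Real.sqrt_nonneg (k:ℝ)])
    nlinarith
end
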